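/- arXiv:2602.22980 — 8 statements merged into one kernel-verified Lean document; each statement's English description precedes it below -/
import Mathlib

section
/- For every graph G and every edge e of G, the isolation number of the graph obtained by subdividing e satisfies ι(G) ≤ ι(G_e) ≤ ι(G) + 1. -/
open SimpleGraph

/-- `v` lies in the closed neighbourhood of the set `D`. -/
def inClosedNbhd {V : Type*} (G : SimpleGraph V) (D : Set V) (v : V) : Prop :=
  ∃ d ∈ D, d = v ∨ G.Adj d v

/-- `D` is an isolating set of `G`: the graph induced on the vertices outside
`N[D]` has no edges. -/
def IsIsolating {V : Type*} (G : SimpleGraph V) (D : Set V) : Prop :=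
  ∀ u v : V, G.Adj u v → inClosedNbhd G D u ∨ inClosedNbhd G D v

/-- The isolation number of a finite graph. -/
noncomputable def iso {V : Type*} (G : SimpleGraph V) [Fintype V] : ℕ :=
  sInf {n | ∃ D : Finset V, D.card = n ∧ IsIsolating G ↑D}

/-- The graph obtained from `G` by subdividing each edge in `A` once; the new
(subdivision) vertices are the elements of `A`. -/
def subdivide {V : Type*} (G : SimpleGraph V) (A : Finset (Sym2 V)) :
    SimpleGraph (V ⊕ {e : Sym2 V // e ∈ A}) where
  Adj x y :=
    match x, y with
    | Sum.inl u, Sum.inl v => G.Adj u v ∧ s(u, v) ∉ A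
    | Sum.inl u, Sum.inr e => u ∈ (e : Sym2 V)
    | Sum.inr e, Sum.inl u => u ∈ (e : Sym2 V)
    | Sum.inr _, Sum.inr _ => False
  symm := by
    constructor
    rintro (u | e) (v | f) h <;> dsimp only at h ⊢ <;>
      first
        | exact ⟨h.1.symm, by rw [Sym2.eq_swap]; exact h.2⟩
        | exact h
        | exact h.elim
  loopless := by
    constructor
    rintro (u | e) h <;> dsimp only at h <;>
      first
        | exact G.loopless.irrefl u h.1
        | exact h

/-- A graph is `(ι,q)`-critical. -/
def IotaCritical {V : Type*} (G : SimpleGraph V) [Fintype V] (q : ℕ) : Prop :=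
  (∀ A : Finset (Sym2 V), ↑A ⊆ G.edgeSet → A.card = q →
      iso G < iso (subdivide G A)) ∧
  (∃ A : Finset (Sym2 V), ↑A ⊆ G.edgeSet ∧ A.card = q - 1 ∧
      iso (subdivide G A) = iso G)


lemma isolating_univ {V : Type*} [Fintype V] (G : SimpleGraph V) :
    IsIsolating G ↑(Finset.univ : Finset V) :=
  fun u _ _ => Or.inl ⟨u, Finset.mem_coe.2 (Finset.mem_univ u), Or.inl rfl⟩

lemma iso_le {V : Type*} [Fintype V] (G : SimpleGraph V) (D : Finset V)
    (h : IsIsolating G ↑D) : iso G ≤ D.card :=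
  Nat.sInf_le ⟨D, rfl, h⟩

lemma exists_iso {V : Type*} [Fintype V] (G : SimpleGraph V) :
    ∃ D : Finset V, D.card = iso G ∧ IsIsolating G ↑D := by
  have h : {n | ∃ D : Finset V, D.card = n ∧ IsIsolating G ↑D}.Nonempty :=
    ⟨Finset.univ.card, Finset.univ, rfl, isolating_univ G⟩
  exact Nat.sInf_mem h

theorem stmt0 {V : Type*} [Fintype V] (G : SimpleGraph V) (e : Sym2 V)
    (he : e ∈ G.edgeSet) :
    iso G ≤ iso (subdivide G {e}) ∧ iso (subdivide G {e}) ≤ iso G + 1 := by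
  classical
  obtain ⟨a, b, rfl⟩ : ∃ a b, e = s(a, b) := by
    induction e using Sym2.ind with
    | _ x y => exact ⟨x, y, rfl⟩
  have hG : G.Adj a b := he
  set A : Finset (Sym2 V) := {s(a, b)} with hA
  set w : V ⊕ {e' : Sym2 V // e' ∈ A} :=
    Sum.inr ⟨s(a, b), Finset.mem_singleton_self _⟩ with hw
  have hinr : ∀ v : {e' : Sym2 V // e' ∈ A}, Sum.inr v = w := by
    intro v
    simp only [hw]
    exact congrArg Sum.inr (Subtype.ext (Finset.mem_singleton.1 v.2))
  constructor
  · -- lower bound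
    obtain ⟨D', hcard', hiso'⟩ := exists_iso (subdivide G A)
    set f : (V ⊕ {e' : Sym2 V // e' ∈ A}) → V := Sum.elim id (fun _ => a) with hf
    set D : Finset V := D'.image f with hD
    have key : ∀ u : V, inClosedNbhd (subdivide G A) ↑D' (Sum.inl u) →
        inClosedNbhd G ↑D u := by
      rintro u ⟨d', hd', hor⟩
      have hfd : f d' ∈ D := Finset.mem_image_of_mem f hd'
      rcases d' with x | ev
      · rcases hor with heq | hadj
        · exact ⟨x, hfd, Or.inl (Sum.inl.inj heq)⟩
        · exact ⟨x, hfd, Or.inr hadj.1⟩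
      · rcases hor with heq | hadj
        · exact absurd heq (by simp)
        · have hm : u ∈ (ev : Sym2 V) := hadj
          have hev : (ev : Sym2 V) = s(a, b) := Finset.mem_singleton.1 ev.2
          rw [hev] at hm
          have hfa : f (Sum.inr ev) = a := rfl
          rw [hfa] at hfd
          rcases Sym2.mem_iff.1 hm with h | h
          · exact ⟨a, hfd, Or.inl h.symm⟩
          · exact ⟨a, hfd, Or.inr (by rw [h]; exact hG)⟩
    have hDiso : IsIsolating G ↑D := by
      intro u v huv
      by_cases heq : s(u, v) = s(a, b)
      · have hu : u ∈ s(a, b) := by rw [← heq]; exact Sym2.mem_mk_left u v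
        have hadj : (subdivide G A).Adj (Sum.inl u) w :=
          show u ∈ _ from hu
        rcases hiso' (Sum.inl u) w hadj with hc | hc
        · exact Or.inl (key u hc)
        · obtain ⟨d', hd', hor⟩ := hc
          have hfd : f d' ∈ D := Finset.mem_image_of_mem f hd'
          rcases Sym2.eq_iff.1 heq with ⟨h1, h2⟩ | ⟨h1, h2⟩
          · rcases d' with x | ev
            · rcases hor with habs | hadj2
              · exact absurd habs (by simp [hw])
              · have hx : x ∈ s(a, b) := hadj2
                rcases Sym2.mem_iff.1 hx with h | h
                · exact Or.inl ⟨x, hfd, Or.inl (h.trans h1.symm)⟩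
                · exact Or.inr ⟨x, hfd, Or.inl (h.trans h2.symm)⟩
            · have hfa : f (Sum.inr ev) = a := rfl
              rw [hfa] at hfd
              exact Or.inl ⟨a, hfd, Or.inl h1.symm⟩
          · rcases d' with x | ev
            · rcases hor with habs | hadj2
              · exact absurd habs (by simp [hw])
              · have hx : x ∈ s(a, b) := hadj2
                rcases Sym2.mem_iff.1 hx with h | h
                · exact Or.inr ⟨x, hfd, Or.inl (h.trans h2.symm)⟩
                · exact Or.inl ⟨x, hfd, Or.inl (h.trans h1.symm)⟩
            · have hfa : f (Sum.inr ev) = a := rfl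
              rw [hfa] at hfd
              exact Or.inr ⟨a, hfd, Or.inl h2.symm⟩
      · have hadj : (subdivide G A).Adj (Sum.inl u) (Sum.inl v) :=
          ⟨huv, fun hm => heq (Finset.mem_singleton.1 hm)⟩
        rcases hiso' _ _ hadj with hc | hc
        · exact Or.inl (key u hc)
        · exact Or.inr (key v hc)
    calc iso G ≤ D.card := iso_le G D hDiso
      _ ≤ D'.card := Finset.card_image_le
      _ = iso (subdivide G A) := hcard'
  · -- upper bound
    obtain ⟨D, hcard, hiso⟩ := exists_iso G
    set D2 : Finset (V ⊕ {e' : Sym2 V // e' ∈ A}) :=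
      D.image Sum.inl ∪ {w} with hD2
    have hwD2 : w ∈ D2 := Finset.mem_union_right _ (Finset.mem_singleton_self w)
    have hdD2 : ∀ d ∈ D, Sum.inl d ∈ D2 :=
      fun d hd => Finset.mem_union_left _ (Finset.mem_image_of_mem _ hd)
    have cover : ∀ x : V, inClosedNbhd G ↑D x →
        inClosedNbhd (subdivide G A) ↑D2 (Sum.inl x) := by
      rintro x ⟨d, hd, (rfl | hdx)⟩
      · exact ⟨Sum.inl d, hdD2 d hd, Or.inl rfl⟩
      · by_cases hde : s(d, x) = s(a, b)
        · refine ⟨w, hwD2, Or.inr ?_⟩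
          show x ∈ s(a, b)
          rw [← hde]
          exact Sym2.mem_mk_right d x
        · exact ⟨Sum.inl d, hdD2 d hd,
            Or.inr ⟨hdx, fun hm => hde (Finset.mem_singleton.1 hm)⟩⟩
    have hD2iso : IsIsolating (subdivide G A) ↑D2 := by
      rintro (u | eu) (v | ev) hadj
      · rcases hiso u v hadj.1 with hc | hc
        · exact Or.inl (cover u hc)
        · exact Or.inr (cover v hc)
      · exact Or.inr ⟨Sum.inr ev, by rw [hinr ev]; exact hwD2, Or.inl rfl⟩
      · exact Or.inl ⟨Sum.inr eu, by rw [hinr eu]; exact hwD2, Or.inl rfl⟩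
      · exact hadj.elim
    calc iso (subdivide G A) ≤ D2.card := iso_le _ D2 hD2iso
      _ ≤ (D.image Sum.inl).card + ({w} : Finset _).card :=
          Finset.card_union_le _ _
      _ = (D.image Sum.inl).card + 1 := by rw [Finset.card_singleton]
      _ ≤ D.card + 1 := Nat.add_le_add_right Finset.card_image_le 1
      _ = iso G + 1 := by rw [hcard]
end

section
/- The isolation number of the path P_n on n ≥ 1 vertices equals ⌈(n−1)/4⌉. -/
open SimpleGraph

theorem stmt2 (n : ℕ) (hn : 1 ≤ n) :
    iso (SimpleGraph.pathGraph n) = (n - 1 + 3) / 4 := by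
  have hkey : n - 1 + 3 = n + 2 := by omega
  rw [hkey]
  set m := (n + 2) / 4 with hmdef
  have hm1 : 4 * m ≤ n + 2 := by omega
  have hm2 : n + 2 < 4 * m + 4 := by omega
  -- the isolating set
  set f : ℕ → Fin n := fun i => ⟨min (4 * i + 2) (n - 1), by omega⟩ with hf
  set D : Finset (Fin n) := (Finset.range m).image f with hD
  have hfval : ∀ i, (f i).val = min (4 * i + 2) (n - 1) := fun i => rfl
  have hcard : D.card = m := by
    rw [hD, Finset.card_image_of_injOn, Finset.card_range]
    intro i hi j hj h
    simp only [Finset.mem_coe, Finset.mem_range] at hi hj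
    have := congrArg Fin.val h
    rw [hfval, hfval] at this
    omega
  have hiso : IsIsolating (SimpleGraph.pathGraph n) ↑D := by
    have main : ∀ a : ℕ, a + 1 < n → ∀ u v : Fin n, u.val = a → v.val = a + 1 →
        inClosedNbhd (SimpleGraph.pathGraph n) ↑D u ∨
          inClosedNbhd (SimpleGraph.pathGraph n) ↑D v := by
      intro a ha u v hu hv
      set j := a / 4 with hj
      have hjm : j ∈ Finset.range m := by
        simp only [Finset.mem_range]; omega
      have hdmem : f j ∈ D := Finset.mem_image_of_mem f hjm
      have hdmem' : f j ∈ (↑D : Set (Fin n)) := Finset.mem_coe.mpr hdmem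
      by_cases h0 : a % 4 = 0
      · right
        refine ⟨f j, hdmem', ?_⟩
        have hcase : (f j).val = v.val ∨ (f j).val + 1 = v.val ∨ v.val + 1 = (f j).val := by
          rw [hfval]; omega
        rcases hcase with h | h
        · exact Or.inl (Fin.ext h)
        · exact Or.inr (pathGraph_adj.mpr h)
      · left
        refine ⟨f j, hdmem', ?_⟩
        have hcase : (f j).val = u.val ∨ (f j).val + 1 = u.val ∨ u.val + 1 = (f j).val := by
          rw [hfval]; omega
        rcases hcase with h | h
        · exact Or.inl (Fin.ext h)
        · exact Or.inr (pathGraph_adj.mpr h)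
    intro u v huv
    rcases pathGraph_adj.mp huv with h | h
    · exact main u.val (h ▸ v.isLt) u v rfl h.symm
    · exact (main v.val (h ▸ u.isLt) v u rfl h.symm).symm
  apply le_antisymm
  · exact Nat.sInf_le ⟨D, hcard, hiso⟩
  · refine le_csInf ⟨m, D, hcard, hiso⟩ ?_
    rintro k ⟨E, hEc, hEiso⟩
    subst hEc
    have hx : ∀ i < m, ∃ d ∈ E, 4 * i ≤ d.val + 1 ∧ d.val + 1 ≤ 4 * i + 3 := by
      intro i hi
      have h1 : 4 * i + 1 < n := by omega
      have hadj : (SimpleGraph.pathGraph n).Adj ⟨4 * i, by omega⟩ ⟨4 * i + 1, h1⟩ :=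
        pathGraph_adj.mpr (Or.inl rfl)
      rcases hEiso _ _ hadj with ⟨d, hdE, hd⟩ | ⟨d, hdE, hd⟩
      · refine ⟨d, hdE, ?_⟩
        have : d.val = 4 * i ∨ d.val + 1 = 4 * i ∨ 4 * i + 1 = d.val := by
          rcases hd with h | h
          · left; rw [h]
          · right; exact pathGraph_adj.mp h
        omega
      · refine ⟨d, hdE, ?_⟩
        have : d.val = 4 * i + 1 ∨ d.val + 1 = 4 * i + 1 ∨ 4 * i + 1 + 1 = d.val := by
          rcases hd with h | h
          · left; rw [h]
          · right; exact pathGraph_adj.mp h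
        omega
    set g : ℕ → Fin n := fun i => if h : i < m then (hx i h).choose else ⟨0, hn⟩ with hg
    have := Finset.card_le_card_of_injOn g (s := Finset.range m) (t := E)
      (fun i hi => by
        simp only [Finset.mem_coe, Finset.mem_range] at hi
        simp only [hg, dif_pos hi]
        exact (hx i hi).choose_spec.1)
      (by
        intro i hi j hj hij
        simp only [Finset.mem_coe, Finset.mem_range] at hi hj
        have h1 := (hx i hi).choose_spec.2
        have h2 := (hx j hj).choose_spec.2
        simp only [hg, dif_pos hi, dif_pos hj] at hij
        rw [hij] at h1
        omega)
    simpa using this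
end

section
/- If G is a cycle on n ≥ 3 vertices, then the isolation subdivision number sd_ι(G) equals 1 if n ≡ 0 (mod 4), 2 if n ≡ 3 (mod 4), 3 if n ≡ 2 (mod 4), and 4 if n ≡ 1 (mod 4). -/
open SimpleGraph
open Fin.NatCast Fin.CommRing

/-- The isolation subdivision number of a graph. -/
noncomputable def sdi {V : Type*} (G : SimpleGraph V) [Fintype V] : ℕ :=
  sInf {k | ∃ A : Finset (Sym2 V), ↑A ⊆ G.edgeSet ∧ A.card = k ∧
    iso G < iso (subdivide G A)}


lemma fin_one_val {m : ℕ} [NeZero m] (hm : 2 ≤ m) : ((1 : Fin m) : ℕ) = 1 := by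
  rw [Fin.val_one']; exact Nat.mod_eq_of_lt (by omega)

lemma cyc_adj_cast {m : ℕ} [NeZero m] (hm : 2 ≤ m) (a : ℕ) :
    (cycleGraph m).Adj ((a : Fin m)) ((a + 1 : ℕ) : Fin m) := by
  rw [cycleGraph_adj']
  right
  have : ((a + 1 : ℕ) : Fin m) - ((a : ℕ) : Fin m) = 1 := by push_cast; ring
  rw [this]
  exact fin_one_val hm

lemma cyc_adj_iff {m : ℕ} [NeZero m] (hm : 2 ≤ m) {u v : Fin m} :
    (cycleGraph m).Adj u v ↔ u = v + 1 ∨ v = u + 1 := by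
  rw [cycleGraph_adj']
  constructor
  · rintro (h | h)
    · left
      have h1 : u - v = 1 := Fin.ext (by rw [h, fin_one_val hm])
      rw [← h1]; ring
    · right
      have h1 : v - u = 1 := Fin.ext (by rw [h, fin_one_val hm])
      rw [← h1]; ring
  · rintro (rfl | rfl) <;> [left; right] <;>
    · have : ∀ w : Fin m, w + 1 - w = 1 := fun w => by ring
      rw [this]; exact fin_one_val hm

lemma cyc_edge_form {m : ℕ} [NeZero m] (hm : 3 ≤ m) {e : Sym2 (Fin m)}
    (he : e ∈ (cycleGraph m).edgeSet) : ∃ j : Fin m, e = s(j, j + 1) := by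
  induction e with
  | _ u v =>
    rw [SimpleGraph.mem_edgeSet, cyc_adj_iff (by omega)] at he
    rcases he with rfl | rfl
    · exact ⟨v, Sym2.eq_swap⟩
    · exact ⟨u, rfl⟩

lemma cyc_edge_inj {m : ℕ} [NeZero m] (hm : 3 ≤ m) {i j : Fin m}
    (h : s(i, i + 1) = s(j, j + 1)) : i = j := by
  rw [Sym2.eq_iff] at h
  rcases h with ⟨rfl, -⟩ | ⟨h1, h2⟩
  · rfl
  · exfalso
    subst h1
    have h3 : j + (1 + 1) = j + 0 := by rw [add_zero, ← add_assoc, h2]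
    have h4 : (1 + 1 : Fin m) = 0 := add_left_cancel h3
    have h5 : ((1 + 1 : Fin m) : ℕ) = 0 := by rw [h4]; rfl
    rw [Fin.val_add, fin_one_val (by omega)] at h5
    rw [Nat.mod_eq_of_lt (by omega)] at h5
    omega


lemma cyc_edgeFinset (m : ℕ) [NeZero m] (hm : 3 ≤ m) :
    (cycleGraph m).edgeFinset = Finset.univ.image (fun j : Fin m => s(j, j + 1)) := by
  ext e
  simp only [mem_edgeFinset, Finset.mem_image, Finset.mem_univ, true_and]
  constructor
  · intro he
    obtain ⟨j, rfl⟩ := cyc_edge_form hm he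
    exact ⟨j, rfl⟩
  · rintro ⟨j, rfl⟩
    rw [SimpleGraph.mem_edgeSet]
    have h1 : ((j.val : ℕ) : Fin m) = j := Fin.cast_val_eq_self j
    have h2 : ((j.val + 1 : ℕ) : Fin m) = j + 1 := by push_cast [h1]; rfl
    have h3 := cyc_adj_cast (m := m) (by omega) j.val
    rwa [h1, h2] at h3

lemma cyc_edgeFinset_card (m : ℕ) [NeZero m] (hm : 3 ≤ m) :
    (cycleGraph m).edgeFinset.card = m := by
  rw [cyc_edgeFinset m hm, Finset.card_image_of_injective _ (fun i j h => cyc_edge_inj hm h)]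
  simp


lemma inClosedNbhd_map {V W : Type*} {G : SimpleGraph V} {H : SimpleGraph W}
    (e : G ≃g H) (D : Finset V) [DecidableEq W] {v : V}
    (h : inClosedNbhd G ↑D v) : inClosedNbhd H ↑(D.image e) (e v) := by
  obtain ⟨d, hd, hrel⟩ := h
  refine ⟨e d, Finset.mem_coe.mpr (Finset.mem_image_of_mem _ hd), ?_⟩
  rcases hrel with rfl | hadj
  · exact Or.inl rfl
  · exact Or.inr (e.map_adj_iff.mpr hadj)

lemma isIsolating_map {V W : Type*} {G : SimpleGraph V} {H : SimpleGraph W}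
    (e : G ≃g H) (D : Finset V) [DecidableEq W] (hD : IsIsolating G ↑D) :
    IsIsolating H ↑(D.image e) := by
  intro u v huv
  have hadj : G.Adj (e.symm u) (e.symm v) := by
    rw [← e.map_adj_iff]; simpa using huv
  rcases hD _ _ hadj with h | h
  · left; simpa using inClosedNbhd_map e D h
  · right; simpa using inClosedNbhd_map e D h

lemma iso_congr {V W : Type*} [Fintype V] [Fintype W] {G : SimpleGraph V}
    {H : SimpleGraph W} (e : G ≃g H) : iso G = iso H := by
  classical
  unfold iso
  congr 1
  ext n
  constructor
  · rintro ⟨D, rfl, hD⟩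
    exact ⟨D.image e, by rw [Finset.card_image_of_injective _ e.injective],
      isIsolating_map e D hD⟩
  · rintro ⟨D, rfl, hD⟩
    exact ⟨D.image e.symm, by rw [Finset.card_image_of_injective _ e.symm.injective],
      isIsolating_map e.symm D hD⟩

lemma natCast_mod_fin (n a : ℕ) [NeZero n] : ((a % n : ℕ) : Fin n) = (a : Fin n) := by
  ext
  simp [Fin.val_natCast, Nat.mod_mod_of_dvd]

/-- The standard isolating set of the cycle. -/
lemma cyc_isolating_exists (m : ℕ) [NeZero m] (hm : 3 ≤ m) :
    ∃ D : Finset (Fin m), D.card = (m + 3) / 4 ∧ IsIsolating (cycleGraph m) ↑D := by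
  classical
  set k := (m + 3) / 4 with hk
  refine ⟨(Finset.range k).image (fun i => ((4 * i : ℕ) : Fin m)), ?_, ?_⟩
  · rw [Finset.card_image_of_injOn, Finset.card_range]
    intro i hi j hj hij
    simp only [Finset.coe_range, Set.mem_Iio] at hi hj
    have vi : ((4 * i : ℕ) : Fin m).val = 4 * i := Fin.val_cast_of_lt (by omega)
    have vj : ((4 * j : ℕ) : Fin m).val = 4 * j := Fin.val_cast_of_lt (by omega)
    have := congrArg Fin.val hij
    rw [vi, vj] at this
    omega
  · have memD : ∀ a : ℕ, a % 4 = 0 → a < m →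
        ((a : ℕ) : Fin m) ∈ (Finset.range k).image (fun i => ((4 * i : ℕ) : Fin m)) := by
      intro a h4 ham
      refine Finset.mem_image.mpr ⟨a / 4, Finset.mem_range.mpr (by omega), by
        congr 1; omega⟩
    have cover : ∀ u : Fin m,
        inClosedNbhd (cycleGraph m) ↑((Finset.range k).image (fun i => ((4 * i : ℕ) : Fin m))) u ∨
        inClosedNbhd (cycleGraph m) ↑((Finset.range k).image (fun i => ((4 * i : ℕ) : Fin m))) (u + 1) := by
      intro u
      set j := u.val with hj
      have hu : ((j : ℕ) : Fin m) = u := Fin.cast_val_eq_self u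
      have hu1 : ((j + 1 : ℕ) : Fin m) = u + 1 := by push_cast [hu]; rfl
      have hjm : j < m := u.isLt
      have h4 : j % 4 = 0 ∨ j % 4 = 1 ∨ j % 4 = 2 ∨ j % 4 = 3 := by omega
      rcases h4 with h0 | h1 | h2 | h3
      · exact Or.inl ⟨u, by rw [← hu]; exact Finset.mem_coe.mpr (memD j h0 hjm), Or.inl rfl⟩
      · refine Or.inl ⟨((j - 1 : ℕ) : Fin m), Finset.mem_coe.mpr (memD (j - 1) (by omega) (by omega)), Or.inr ?_⟩
        have h := cyc_adj_cast (m := m) (by omega) (j - 1)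
        rw [show j - 1 + 1 = j by omega, hu] at h
        exact h
      · -- j % 4 = 2 : cover u + 1
        right
        rcases Nat.lt_or_ge (j + 1) m with hlt | hge
        · refine ⟨(((j + 2) % m : ℕ) : Fin m), Finset.mem_coe.mpr (memD ((j + 2) % m) ?_ (Nat.mod_lt _ (by omega))), Or.inr ?_⟩
          · rcases Nat.lt_or_ge (j + 2) m with h' | h'
            · rw [Nat.mod_eq_of_lt h']; omega
            · have : j + 2 = m := by omega
              rw [this, Nat.mod_self]
          · have h := cyc_adj_cast (m := m) (by omega) (j + 1)
            rw [hu1] at h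
            rw [natCast_mod_fin]
            exact h.symm
        · have hjm1 : j + 1 = m := by omega
          refine ⟨u + 1, ?_, Or.inl rfl⟩
          have : u + 1 = ((0 : ℕ) : Fin m) := by
            rw [← hu1, hjm1, Fin.natCast_self, Nat.cast_zero]
          rw [this]
          exact Finset.mem_coe.mpr (memD 0 rfl (by omega))
      · -- j % 4 = 3 : cover u + 1
        right
        rcases Nat.lt_or_ge (j + 1) m with hlt | hge
        · refine ⟨u + 1, ?_, Or.inl rfl⟩
          rw [← hu1]
          exact Finset.mem_coe.mpr (memD (j + 1) (by omega) hlt)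
        · have hjm1 : j + 1 = m := by omega
          refine ⟨u + 1, ?_, Or.inl rfl⟩
          have : u + 1 = ((0 : ℕ) : Fin m) := by
            rw [← hu1, hjm1, Fin.natCast_self, Nat.cast_zero]
          rw [this]
          exact Finset.mem_coe.mpr (memD 0 rfl (by omega))
    intro u v huv
    rw [cyc_adj_iff (by omega)] at huv
    rcases huv with rfl | rfl
    · rcases cover v with h | h
      · exact Or.inr h
      · exact Or.inl h
    · exact cover u

lemma cyc_isolating_card {m : ℕ} [NeZero m] (hm : 3 ≤ m) (D : Finset (Fin m))
    (hD : IsIsolating (cycleGraph m) ↑D) : m ≤ 4 * D.card := by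
  classical
  have hsub : (Finset.univ : Finset (Fin m)) ⊆
      D.biUnion (fun d => {d - 2, d - 1, d, d + 1}) := by
    intro j _
    have hadj : (cycleGraph m).Adj j (j + 1) := (cyc_adj_iff (by omega)).mpr (Or.inr rfl)
    rw [Finset.mem_biUnion]
    simp only [Finset.mem_insert, Finset.mem_singleton]
    rcases hD _ _ hadj with ⟨d, hd, hrel⟩ | ⟨d, hd, hrel⟩ <;>
        refine ⟨d, Finset.mem_coe.mp hd, ?_⟩
    · rcases hrel with rfl | hadj2
      · tauto
      · rw [cyc_adj_iff (by omega)] at hadj2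
        rcases hadj2 with h | h
        · right; left; rw [h]; ring
        · tauto
    · rcases hrel with rfl | hadj2
      · right; left; rw [add_sub_cancel_right]
      · rw [cyc_adj_iff (by omega)] at hadj2
        rcases hadj2 with h | h
        · left; rw [h]; ring
        · have h' := h
          rw [add_left_inj] at h'
          exact Or.inr (Or.inr (Or.inl h'))
  have h1 := Finset.card_le_card hsub
  rw [Finset.card_univ, Fintype.card_fin] at h1
  have h2 := Finset.card_biUnion_le (s := D)
      (t := fun d : Fin m => ({d - 2, d - 1, d, d + 1} : Finset (Fin m)))
  have h3 : ∀ d : Fin m, ({d - 2, d - 1, d, d + 1} : Finset (Fin m)).card ≤ 4 := by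
    intro d
    refine (Finset.card_insert_le _ _).trans (Nat.succ_le_succ ?_)
    refine (Finset.card_insert_le _ _).trans (Nat.succ_le_succ ?_)
    refine (Finset.card_insert_le _ _).trans (Nat.succ_le_succ ?_)
    simp
  calc m ≤ (D.biUnion fun d => {d - 2, d - 1, d, d + 1}).card := h1
    _ ≤ ∑ d ∈ D, ({d - 2, d - 1, d, d + 1} : Finset (Fin m)).card := h2
    _ ≤ ∑ _d ∈ D, 4 := Finset.sum_le_sum (fun d _ => h3 d)
    _ = 4 * D.card := by rw [Finset.sum_const, smul_eq_mul, mul_comm]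

lemma iso_cycle (m : ℕ) (hm : 3 ≤ m) : iso (cycleGraph m) = (m + 3) / 4 := by
  haveI : NeZero m := ⟨by omega⟩
  obtain ⟨D₀, hcard, hiso⟩ := cyc_isolating_exists m hm
  refine le_antisymm (Nat.sInf_le ⟨D₀, hcard, hiso⟩) ?_
  refine le_csInf ⟨_, ⟨D₀, hcard, hiso⟩⟩ ?_
  rintro t ⟨D, rfl, hD⟩
  have := cyc_isolating_card hm D hD
  omega


section Subdiv

variable {n : ℕ} [NeZero n]

/-- The set of base indices of the subdivided edges. -/
def BB (n : ℕ) [NeZero n] (A : Finset (Sym2 (Fin n))) : Finset (Fin n) :=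
  Finset.univ.filter (fun j => s(j, j + 1) ∈ A)

/-- Count of subdivided edges with base index `< t`. -/
def cc (n : ℕ) [NeZero n] (A : Finset (Sym2 (Fin n))) (t : ℕ) : ℕ :=
  ((BB n A).filter (fun j => j.val < t)).card

lemma mem_BB {A : Finset (Sym2 (Fin n))} {j : Fin n} :
    j ∈ BB n A ↔ s(j, j + 1) ∈ A := by simp [BB]

lemma cc_zero (A : Finset (Sym2 (Fin n))) : cc n A 0 = 0 := by
  simp [cc]

lemma cc_mono (A : Finset (Sym2 (Fin n))) {t t' : ℕ} (h : t ≤ t') : cc n A t ≤ cc n A t' := by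
  apply Finset.card_le_card
  intro x hx
  simp only [Finset.mem_filter] at hx ⊢
  exact ⟨hx.1, by omega⟩

lemma cc_le (A : Finset (Sym2 (Fin n))) (t : ℕ) : cc n A t ≤ (BB n A).card :=
  Finset.card_le_card (Finset.filter_subset _ _)

lemma cc_top (A : Finset (Sym2 (Fin n))) : cc n A n = (BB n A).card := by
  unfold cc
  rw [Finset.filter_true_of_mem (fun x _ => x.isLt)]

lemma cc_succ (A : Finset (Sym2 (Fin n))) (j : Fin n) :
    cc n A (j.val + 1) = cc n A j.val + (if j ∈ BB n A then 1 else 0) := by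
  unfold cc
  by_cases hj : j ∈ BB n A
  · rw [if_pos hj]
    have : (BB n A).filter (fun x => x.val < j.val + 1) =
        insert j ((BB n A).filter (fun x => x.val < j.val)) := by
      ext x
      simp only [Finset.mem_filter, Finset.mem_insert]
      constructor
      · rintro ⟨hx, hlt⟩
        rcases Nat.lt_or_ge x.val j.val with h | h
        · exact Or.inr ⟨hx, h⟩
        · exact Or.inl (Fin.ext (by omega))
      · rintro (rfl | ⟨hx, hlt⟩)
        · exact ⟨hj, by omega⟩
        · exact ⟨hx, by omega⟩
    rw [this, Finset.card_insert_of_notMem (by simp)]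
  · rw [if_neg hj, add_zero]
    congr 1
    ext x
    simp only [Finset.mem_filter]
    constructor
    · rintro ⟨hx, hlt⟩
      refine ⟨hx, ?_⟩
      rcases Nat.lt_or_ge x.val j.val with h | h
      · exact h
      · exact absurd (Fin.ext (show x.val = j.val by omega) : x = j) (by rintro rfl; exact hj hx)
    · rintro ⟨hx, hlt⟩
      exact ⟨hx, by omega⟩

lemma cc_lt_of_mem (A : Finset (Sym2 (Fin n))) {j : Fin n} (hj : j ∈ BB n A) :
    cc n A j.val < (BB n A).card := by
  apply Finset.card_lt_card
  constructor
  · exact Finset.filter_subset _ _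
  · intro hsub
    have := hsub hj
    simp at this

lemma BB_card {A : Finset (Sym2 (Fin n))} (hn : 3 ≤ n)
    (hA : ↑A ⊆ (cycleGraph n).edgeSet) : (BB n A).card = A.card := by
  have himg : (BB n A).image (fun j => s(j, j + 1)) = A := by
    ext e
    simp only [Finset.mem_image]
    constructor
    · rintro ⟨j, hj, rfl⟩
      exact mem_BB.mp hj
    · intro he
      obtain ⟨j, rfl⟩ := cyc_edge_form hn (hA he)
      exact ⟨j, mem_BB.mpr he, rfl⟩
  calc (BB n A).card = ((BB n A).image (fun j => s(j, j + 1))).card :=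
        (Finset.card_image_of_injective _ (fun i j h => cyc_edge_inj hn h)).symm
    _ = A.card := by rw [himg]

/-- base index of a cycle edge -/
def idxE (hn : 3 ≤ n) (e : Sym2 (Fin n)) (he : e ∈ (cycleGraph n).edgeSet) : Fin n :=
  Finset.choose (fun j => s(j, j + 1) = e) Finset.univ (by
    obtain ⟨j, rfl⟩ := cyc_edge_form hn he
    exact ⟨j, ⟨Finset.mem_univ j, rfl⟩, fun y hy => cyc_edge_inj hn hy.2⟩)

lemma idxE_spec (hn : 3 ≤ n) (e : Sym2 (Fin n)) (he : e ∈ (cycleGraph n).edgeSet) :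
    s(idxE hn e he, idxE hn e he + 1) = e :=
  Finset.choose_property (fun j => s(j, j + 1) = e) Finset.univ _

lemma idxE_eq (hn : 3 ≤ n) (u : Fin n) (he : s(u, u + 1) ∈ (cycleGraph n).edgeSet) :
    idxE hn s(u, u + 1) he = u :=
  cyc_edge_inj hn (idxE_spec hn _ he)

instance nzN {A : Finset (Sym2 (Fin n))} : NeZero (n + A.card) :=
  ⟨by have := NeZero.ne n; omega⟩

variable (hn : 3 ≤ n) (A : Finset (Sym2 (Fin n))) (hA : ↑A ⊆ (cycleGraph n).edgeSet)

/-- positions of the vertices of the subdivided cycle -/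
def fsub : Fin n ⊕ {e : Sym2 (Fin n) // e ∈ A} → ℕ
  | Sum.inl u => u.val + cc n A u.val
  | Sum.inr e => (idxE hn e.val (hA e.prop)).val + cc n A (idxE hn e.val (hA e.prop)).val + 1

lemma fsub_lt (x : Fin n ⊕ {e : Sym2 (Fin n) // e ∈ A}) : fsub hn A hA x < n + A.card := by
  cases x with
  | inl u =>
    have h1 := cc_le A u.val
    have h2 := BB_card hn hA
    have := u.isLt
    simp only [fsub]
    omega
  | inr e =>
    simp only [fsub]
    set j := idxE hn e.val (hA e.prop) with hj
    have hjB : j ∈ BB n A := by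
      rw [mem_BB, hj, idxE_spec hn e.val (hA e.prop)]
      exact e.prop
    have h1 := cc_lt_of_mem A hjB
    have h2 := BB_card hn hA
    have := j.isLt
    omega


/-- the vertex relabelling map -/
def FF (x : Fin n ⊕ {e : Sym2 (Fin n) // e ∈ A}) : Fin (n + A.card) :=
  ((fsub hn A hA x : ℕ) : Fin (n + A.card))

lemma FF_val (x : Fin n ⊕ {e : Sym2 (Fin n) // e ∈ A}) :
    (FF hn A hA x).val = fsub hn A hA x :=
  Fin.val_cast_of_lt (fsub_lt hn A hA x)

lemma idxE_mem_BB (e : {e : Sym2 (Fin n) // e ∈ A}) :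
    idxE hn e.val (hA e.prop) ∈ BB n A := by
  rw [mem_BB, idxE_spec hn e.val (hA e.prop)]
  exact e.prop

lemma FF_inj : Function.Injective (FF hn A hA) := by
  intro x y h
  have hv : fsub hn A hA x = fsub hn A hA y := by
    rw [← FF_val hn A hA, ← FF_val hn A hA, h]
  clear h
  cases x with
  | inl u =>
    cases y with
    | inl v =>
      simp only [fsub] at hv
      rcases lt_trichotomy u.val v.val with hlt | heq | hgt
      · have := cc_mono A (show u.val ≤ v.val by omega)
        omega
      · exact congrArg Sum.inl (Fin.ext heq)
      · have := cc_mono A (show v.val ≤ u.val by omega)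
        omega
    | inr e =>
      exfalso
      simp only [fsub] at hv
      set j := idxE hn e.val (hA e.prop) with hj
      have hjB : j ∈ BB n A := idxE_mem_BB hn A hA e
      rcases Nat.lt_or_ge j.val u.val with hlt | hge
      · have h1 := cc_mono A (show j.val + 1 ≤ u.val by omega)
        have h2 := cc_succ A j
        rw [if_pos hjB] at h2
        omega
      · have := cc_mono A (show u.val ≤ j.val by omega)
        omega
  | inr e =>
    cases y with
    | inl v =>
      exfalso
      simp only [fsub] at hv
      set j := idxE hn e.val (hA e.prop) with hj
      have hjB : j ∈ BB n A := idxE_mem_BB hn A hA e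
      rcases Nat.lt_or_ge j.val v.val with hlt | hge
      · have h1 := cc_mono A (show j.val + 1 ≤ v.val by omega)
        have h2 := cc_succ A j
        rw [if_pos hjB] at h2
        omega
      · have := cc_mono A (show v.val ≤ j.val by omega)
        omega
    | inr e' =>
      simp only [fsub] at hv
      set j := idxE hn e.val (hA e.prop) with hj
      set j' := idxE hn e'.val (hA e'.prop) with hj'
      have hjj : j = j' := by
        rcases lt_trichotomy j.val j'.val with hlt | heq | hgt
        · have := cc_mono A (show j.val ≤ j'.val by omega)
          omega
        · exact Fin.ext heq
        · have := cc_mono A (show j'.val ≤ j.val by omega)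
          omega
      refine congrArg Sum.inr (Subtype.ext ?_)
      rw [← idxE_spec hn e.val (hA e.prop), ← idxE_spec hn e'.val (hA e'.prop), ← hj, ← hj', hjj]

lemma L1 (u : Fin n) (h : s(u, u + 1) ∉ A) :
    FF hn A hA (Sum.inl (u + 1)) = FF hn A hA (Sum.inl u) + 1 := by
  have hB : u ∉ BB n A := fun hB => h (mem_BB.mp hB)
  have hval : (u + 1).val = (u.val + 1) % n := by
    rw [Fin.val_add, fin_one_val (by omega)]
  have hsucc := cc_succ A u
  rw [if_neg hB, add_zero] at hsucc
  simp only [FF, fsub]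
  rcases Nat.lt_or_ge (u.val + 1) n with hlt | hge
  · rw [hval, Nat.mod_eq_of_lt hlt, hsucc]
    push_cast
    ring
  · have hn1 : u.val + 1 = n := by have := u.isLt; omega
    have hcc : cc n A u.val = A.card := by
      have := cc_top A
      rw [← BB_card hn hA, ← this, ← hsucc, hn1]
    have hv0 : (u + 1).val = 0 := by rw [hval, hn1, Nat.mod_self]
    rw [hv0, cc_zero, hcc]
    have h1 : ((u.val + A.card : ℕ) : Fin (n + A.card)) + 1 =
        ((u.val + A.card + 1 : ℕ) : Fin (n + A.card)) := by push_cast; ring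
    rw [h1, show u.val + A.card + 1 = n + A.card by omega, Fin.natCast_self]
    norm_num

lemma L2 (e : {e : Sym2 (Fin n) // e ∈ A}) :
    FF hn A hA (Sum.inr e) = FF hn A hA (Sum.inl (idxE hn e.val (hA e.prop))) + 1 ∧
    FF hn A hA (Sum.inl (idxE hn e.val (hA e.prop) + 1)) = FF hn A hA (Sum.inr e) + 1 := by
  set j := idxE hn e.val (hA e.prop) with hjdef
  have hjB : j ∈ BB n A := idxE_mem_BB hn A hA e
  have hsucc := cc_succ A j
  rw [if_pos hjB] at hsucc
  constructor
  · simp only [FF, fsub]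
    rw [← hjdef]
    push_cast
    ring
  · have hval : (j + 1).val = (j.val + 1) % n := by
      rw [Fin.val_add, fin_one_val (by omega)]
    simp only [FF, fsub]
    rw [← hjdef]
    rcases Nat.lt_or_ge (j.val + 1) n with hlt | hge
    · rw [hval, Nat.mod_eq_of_lt hlt, hsucc]
      push_cast
      ring
    · have hn1 : j.val + 1 = n := by have := j.isLt; omega
      have hcc : cc n A j.val + 1 = A.card := by
        have := cc_top A
        rw [← BB_card hn hA, ← this, ← hsucc, hn1]
      have hv0 : (j + 1).val = 0 := by rw [hval, hn1, Nat.mod_self]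
      rw [hv0, cc_zero]
      have h1 : ((j.val + cc n A j.val + 1 : ℕ) : Fin (n + A.card)) + 1 =
          ((j.val + cc n A j.val + 2 : ℕ) : Fin (n + A.card)) := by push_cast; ring
      rw [h1, show j.val + cc n A j.val + 2 = n + A.card by omega, Fin.natCast_self]
      norm_num

/-- the successor of a vertex in the subdivided cycle -/
def succS (x : Fin n ⊕ {e : Sym2 (Fin n) // e ∈ A}) : Fin n ⊕ {e : Sym2 (Fin n) // e ∈ A} :=
  match x with
  | Sum.inl u => if h : s(u, u + 1) ∈ A then Sum.inr ⟨s(u, u + 1), h⟩ else Sum.inl (u + 1)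
  | Sum.inr e => Sum.inl (idxE hn e.val (hA e.prop) + 1)

lemma FF_succS (x : Fin n ⊕ {e : Sym2 (Fin n) // e ∈ A}) :
    FF hn A hA (succS hn A hA x) = FF hn A hA x + 1 := by
  cases x with
  | inl u =>
    simp only [succS]
    split
    · next h =>
      have h2 := (L2 hn A hA ⟨s(u, u + 1), h⟩).1
      rwa [idxE_eq hn u (hA h)] at h2
    · next h =>
      exact L1 hn A hA u h
  | inr e =>
    exact (L2 hn A hA e).2

lemma adj_succS (x : Fin n ⊕ {e : Sym2 (Fin n) // e ∈ A}) :
    (subdivide (cycleGraph n) A).Adj x (succS hn A hA x) := by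
  cases x with
  | inl u =>
    simp only [succS]
    split
    · next h =>
      show u ∈ (s(u, u + 1) : Sym2 (Fin n))
      exact Sym2.mem_mk_left u (u + 1)
    · next h =>
      refine ⟨(cyc_adj_iff (by omega)).mpr (Or.inr rfl), h⟩
  | inr e =>
    show idxE hn e.val (hA e.prop) + 1 ∈ (e.val : Sym2 (Fin n))
    have hmem := Sym2.mem_mk_right (idxE hn e.val (hA e.prop)) (idxE hn e.val (hA e.prop) + 1)
    rwa [idxE_spec hn e.val (hA e.prop)] at hmem

end Subdiv

theorem subdivide_iso_cycle {n : ℕ} [NeZero n] (hn : 3 ≤ n) (A : Finset (Sym2 (Fin n)))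
    (hA : ↑A ⊆ (cycleGraph n).edgeSet) :
    Nonempty ((subdivide (cycleGraph n) A) ≃g cycleGraph (n + A.card)) := by
  have hcard : Fintype.card (Fin n ⊕ {e : Sym2 (Fin n) // e ∈ A}) =
      Fintype.card (Fin (n + A.card)) := by
    simp [Fintype.card_sum]
  have hbij : Function.Bijective (FF hn A hA) :=
    (Fintype.bijective_iff_injective_and_card _).mpr ⟨FF_inj hn A hA, hcard⟩
  have hNge : 2 ≤ n + A.card := by omega
  refine ⟨⟨Equiv.ofBijective _ hbij, ?_⟩⟩
  intro x y
  show (cycleGraph (n + A.card)).Adj (FF hn A hA x) (FF hn A hA y) ↔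
    (subdivide (cycleGraph n) A).Adj x y
  constructor
  · intro h
    rw [cyc_adj_iff hNge] at h
    rcases h with h | h
    · have hx : x = succS hn A hA y :=
        FF_inj hn A hA (by rw [FF_succS hn A hA y, h])
      rw [hx]
      exact (adj_succS hn A hA y).symm
    · have hy : y = succS hn A hA x :=
        FF_inj hn A hA (by rw [FF_succS hn A hA x, h])
      rw [hy]
      exact adj_succS hn A hA x
  · intro h
    rw [cyc_adj_iff hNge]
    cases x with
    | inl u =>
      cases y with
      | inl v =>
        obtain ⟨hadj, hne⟩ := h
        rcases (cyc_adj_iff (by omega)).mp hadj with h1 | h1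
        · subst h1
          left
          exact L1 hn A hA v (by rwa [Sym2.eq_swap] at hne)
        · subst h1
          right
          exact L1 hn A hA u hne
      | inr e =>
        have hmem : u ∈ (e.val : Sym2 (Fin n)) := h
        rw [← idxE_spec hn e.val (hA e.prop), Sym2.mem_iff] at hmem
        rcases hmem with rfl | rfl
        · right
          exact (L2 hn A hA e).1
        · left
          exact (L2 hn A hA e).2
    | inr e =>
      cases y with
      | inl u =>
        have hmem : u ∈ (e.val : Sym2 (Fin n)) := h
        rw [← idxE_spec hn e.val (hA e.prop), Sym2.mem_iff] at hmem
        rcases hmem with rfl | rfl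
        · left
          exact (L2 hn A hA e).1
        · right
          exact (L2 hn A hA e).2
      | inr e' =>
        exact absurd h id


lemma iso_subdivide {n : ℕ} (hn : 3 ≤ n) (A : Finset (Sym2 (Fin n)))
    (hA : ↑A ⊆ (SimpleGraph.cycleGraph n).edgeSet) :
    iso (subdivide (SimpleGraph.cycleGraph n) A) = (n + A.card + 3) / 4 := by
  haveI : NeZero n := ⟨by omega⟩
  obtain ⟨E⟩ := subdivide_iso_cycle hn A hA
  rw [iso_congr E, iso_cycle (n + A.card) (by omega)]

lemma sdi_main {n : ℕ} (hn : 3 ≤ n) (r : ℕ) (hrn : r ≤ n)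
    (hmem : (n + 3) / 4 < (n + r + 3) / 4)
    (hmin : ∀ k : ℕ, (n + 3) / 4 < (n + k + 3) / 4 → r ≤ k) :
    sdi (SimpleGraph.cycleGraph n) = r := by
  haveI : NeZero n := ⟨by omega⟩
  have hrS : r ∈ {k | ∃ A : Finset (Sym2 (Fin n)), ↑A ⊆ (SimpleGraph.cycleGraph n).edgeSet ∧
      A.card = k ∧ iso (SimpleGraph.cycleGraph n) < iso (subdivide (SimpleGraph.cycleGraph n) A)} := by
    obtain ⟨A, hAsub, hAcard⟩ := Finset.exists_subset_card_eq (s := (SimpleGraph.cycleGraph n).edgeFinset) (n := r)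
      (by rw [cyc_edgeFinset_card n hn]; exact hrn)
    have hAsub' : ↑A ⊆ (SimpleGraph.cycleGraph n).edgeSet := by
      intro e he
      exact SimpleGraph.mem_edgeFinset.mp (hAsub he)
    refine ⟨A, hAsub', hAcard, ?_⟩
    rw [iso_cycle n hn, iso_subdivide hn A hAsub', hAcard]
    exact hmem
  refine le_antisymm (Nat.sInf_le hrS) (le_csInf ⟨r, hrS⟩ ?_)
  rintro k ⟨A, hAsub, rfl, hlt⟩
  rw [iso_cycle n hn, iso_subdivide hn A hAsub] at hlt
  exact hmin _ hlt

theorem stmt6 (n : ℕ) (hn : 3 ≤ n) :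
    (n % 4 = 0 → sdi (SimpleGraph.cycleGraph n) = 1) ∧
    (n % 4 = 3 → sdi (SimpleGraph.cycleGraph n) = 2) ∧
    (n % 4 = 2 → sdi (SimpleGraph.cycleGraph n) = 3) ∧
    (n % 4 = 1 → sdi (SimpleGraph.cycleGraph n) = 4) := by
  refine ⟨?_, ?_, ?_, ?_⟩ <;> intro h
  · exact sdi_main hn 1 (by omega) (by omega) (fun k hk => by omega)
  · exact sdi_main hn 2 (by omega) (by omega) (fun k hk => by omega)
  · exact sdi_main hn 3 (by omega) (by omega) (fun k hk => by omega)
  · exact sdi_main hn 4 (by omega) (by omega) (fun k hk => by omega)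
end

section
/- Let t ≥ 2 and 1 ≤ d ≤ t−1, and let T be the d-wounded spider S_{t,t−d} (obtained from the star K_{1,t} by subdividing t−d of its edges). Then T is (ι,q)-critical with q = d+1; that is, subdividing any d+1 edges of T increases ι(T), while there exists a set of d edges whose subdivision leaves ι(T) unchanged. -/
open SimpleGraph

/-- The edges of the star `K_{1,t}` that get subdivided to form the
`d`-wounded spider: the edges to the leaves `v_i` with `i ≥ d`. -/
def woundedEdges (t d : ℕ) : Finset (Sym2 (Unit ⊕ Fin t)) :=
  (Finset.univ.filter (fun i : Fin t => d ≤ (i : ℕ))).image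
    (fun i => s(Sum.inl (), Sum.inr i))

/-- The `d`-wounded spider `S_{t,t-d}`, obtained from the star `K_{1,t}`
by subdividing `t - d` of its edges. -/
def woundedSpider (t d : ℕ) :=
  subdivide (completeBipartiteGraph Unit (Fin t)) (woundedEdges t d)

set_option maxHeartbeats 2000000

section helpers
variable {V : Type*} (G : SimpleGraph V)

lemma isIsolating_mono {D D' : Set V} (h : D ⊆ D') (hD : IsIsolating G D) :
    IsIsolating G D' := by
  intro u v huv
  rcases hD u v huv with ⟨w, hw, hw2⟩ | ⟨w, hw, hw2⟩
  · exact Or.inl ⟨w, h hw, hw2⟩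
  · exact Or.inr ⟨w, h hw, hw2⟩

lemma isIsolating_univ : IsIsolating G Set.univ := by
  intro u v _
  exact Or.inl ⟨u, trivial, Or.inl rfl⟩

variable [Fintype V]

lemma iso_eq_one {v : V} (h1 : IsIsolating G {v}) {a b : V} (hab : G.Adj a b) :
    iso G = 1 := by
  have hmem : 1 ∈ {n | ∃ D : Finset V, D.card = n ∧ IsIsolating G ↑D} :=
    ⟨{v}, Finset.card_singleton v, by simpa using h1⟩
  refine le_antisymm (Nat.sInf_le hmem) ?_
  rw [Nat.one_le_iff_ne_zero, Ne, iso, Nat.sInf_eq_zero]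
  rintro (⟨D, hD0, hDiso⟩ | hempty)
  · rw [Finset.card_eq_zero] at hD0
    subst hD0
    rcases hDiso a b hab with ⟨w, hw, -⟩ | ⟨w, hw, -⟩ <;> simp at hw
  · exact Set.eq_empty_iff_forall_notMem.mp hempty 1 hmem

lemma two_le_iso [Nonempty V] (h : ∀ v : V, ¬ IsIsolating G {v}) : 2 ≤ iso G := by
  have hne : {n | ∃ D : Finset V, D.card = n ∧ IsIsolating G ↑D}.Nonempty :=
    ⟨_, Finset.univ, rfl, by simpa using isIsolating_univ G⟩
  obtain ⟨D, hcard, hiso⟩ := Nat.sInf_mem hne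
  by_contra hlt
  push_neg at hlt
  rw [Nat.lt_succ_iff] at hlt
  unfold iso at hlt
  rw [← hcard] at hlt
  interval_cases hc : D.card
  · rw [Finset.card_eq_zero] at hc
    subst hc
    obtain ⟨v⟩ := ‹Nonempty V›
    exact h v (isIsolating_mono G (by simp) hiso)
  · rw [Finset.card_eq_one] at hc
    obtain ⟨w, rfl⟩ := hc
    exact h w (by simpa using hiso)

end helpers

@[simp] lemma subdivide_adj_inl_inl {V : Type*} (G : SimpleGraph V) (A : Finset (Sym2 V))
    (u v : V) : (subdivide G A).Adj (Sum.inl u) (Sum.inl v) ↔ G.Adj u v ∧ s(u, v) ∉ A :=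
  Iff.rfl

@[simp] lemma subdivide_adj_inl_inr {V : Type*} (G : SimpleGraph V) (A : Finset (Sym2 V))
    (u : V) (e : {e : Sym2 V // e ∈ A}) :
    (subdivide G A).Adj (Sum.inl u) (Sum.inr e) ↔ u ∈ (e : Sym2 V) := Iff.rfl

@[simp] lemma subdivide_adj_inr_inl {V : Type*} (G : SimpleGraph V) (A : Finset (Sym2 V))
    (u : V) (e : {e : Sym2 V // e ∈ A}) :
    (subdivide G A).Adj (Sum.inr e) (Sum.inl u) ↔ u ∈ (e : Sym2 V) := Iff.rfl

@[simp] lemma subdivide_adj_inr_inr {V : Type*} (G : SimpleGraph V) (A : Finset (Sym2 V))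
    (e f : {e : Sym2 V // e ∈ A}) :
    ¬ (subdivide G A).Adj (Sum.inr e) (Sum.inr f) := fun h => h

@[simp] lemma mem_woundedEdges {t d : ℕ} (e : Sym2 (Unit ⊕ Fin t)) :
    e ∈ woundedEdges t d ↔ ∃ i : Fin t, d ≤ (i : ℕ) ∧ s(Sum.inl (), Sum.inr i) = e := by
  simp [woundedEdges]

-- notation
variable {t d : ℕ}

abbrev Ew (t d : ℕ) := {e : Sym2 (Unit ⊕ Fin t) // e ∈ woundedEdges t d}
abbrev V1 (t d : ℕ) := (Unit ⊕ Fin t) ⊕ Ew t d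
abbrev X : V1 t d := Sum.inl (Sum.inl ())
abbrev vtx (i : Fin t) : V1 t d := Sum.inl (Sum.inr i)

lemma ew_val (ε : Ew t d) : ∃ j : Fin t, d ≤ (j : ℕ) ∧ ε.val = s(Sum.inl (), Sum.inr j) := by
  obtain ⟨e, he⟩ := ε
  rw [mem_woundedEdges] at he
  obtain ⟨j, hj, hje⟩ := he
  exact ⟨j, hj, hje.symm⟩

lemma edge_cases {e : Sym2 (V1 t d)} (he : e ∈ (woundedSpider t d).edgeSet) :
    (∃ i : Fin t, (i : ℕ) < d ∧ e = s(X, vtx i)) ∨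
    (∃ (j : Fin t) (ε : Ew t d), d ≤ (j : ℕ) ∧ ε.val = s(Sum.inl (), Sum.inr j) ∧
      e = s(X, Sum.inr ε)) ∨
    (∃ (j : Fin t) (ε : Ew t d), d ≤ (j : ℕ) ∧ ε.val = s(Sum.inl (), Sum.inr j) ∧
      e = s(vtx j, Sum.inr ε)) := by
  induction e using Sym2.ind with
  | _ p q =>
    rw [mem_edgeSet] at he
    rw [show woundedSpider t d = subdivide (completeBipartiteGraph Unit (Fin t))
      (woundedEdges t d) from rfl] at he
    rcases p with (u | i) | ε <;> rcases q with (u' | i') | ε'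
    · simp at he
    · rcases u with ⟨⟩
      refine Or.inl ⟨i', lt_of_not_ge fun hc => he.2 ?_, rfl⟩
      exact (mem_woundedEdges _).mpr ⟨i', hc, rfl⟩
    · rcases u with ⟨⟩
      obtain ⟨j, hj, hv⟩ := ew_val ε'
      exact Or.inr (Or.inl ⟨j, ε', hj, hv, rfl⟩)
    · rcases u' with ⟨⟩
      refine Or.inl ⟨i, lt_of_not_ge fun hc => he.2 ?_, Sym2.eq_swap⟩
      exact (mem_woundedEdges _).mpr ⟨i, hc, Sym2.eq_swap⟩
    · simp at he
    · obtain ⟨j, hj, hv⟩ := ew_val ε'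
      have hmem : (Sum.inr i : Unit ⊕ Fin t) ∈ ε'.val := he
      rw [hv] at hmem
      simp only [Sym2.mem_iff] at hmem
      rcases hmem with h | h
      · exact absurd h (by simp)
      · rcases Sum.inr_injective h with rfl
        exact Or.inr (Or.inr ⟨i, ε', hj, hv, rfl⟩)
    · rcases u' with ⟨⟩
      obtain ⟨j, hj, hv⟩ := ew_val ε
      exact Or.inr (Or.inl ⟨j, ε, hj, hv, Sym2.eq_swap⟩)
    · obtain ⟨j, hj, hv⟩ := ew_val ε
      have hmem : (Sum.inr i' : Unit ⊕ Fin t) ∈ ε.val := he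
      rw [hv] at hmem
      simp only [Sym2.mem_iff] at hmem
      rcases hmem with h | h
      · exact absurd h (by simp)
      · rcases Sum.inr_injective h with rfl
        exact Or.inr (Or.inr ⟨i', ε, hj, hv, Sym2.eq_swap⟩)
    · exact absurd he (subdivide_adj_inr_inr _ _ _ _)

variable {A : Finset (Sym2 (V1 t d))}

lemma adj_vtx (hA : ↑A ⊆ (woundedSpider t d).edgeSet) {j : Fin t} {ε : Ew t d}
    (hj : d ≤ (j : ℕ)) (hεv : ε.val = s(Sum.inl (), Sum.inr j))
    (z : V1 t d ⊕ {e : Sym2 (V1 t d) // e ∈ A})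
    (hz : (subdivide (woundedSpider t d) A).Adj z (Sum.inl (vtx j))) :
    z = Sum.inl (Sum.inr ε) ∨
      ∃ hy : s(vtx j, Sum.inr ε) ∈ A, z = Sum.inr ⟨s(vtx j, Sum.inr ε), hy⟩ := by
  rcases z with u | a
  · rcases u with a | ε''
    · exfalso
      rcases hz.1 with ⟨hadj, hw⟩
      rcases a with u | i
      · exact hw ((mem_woundedEdges _).mpr ⟨j, hj, rfl⟩)
      · simp at hadj
    · left
      have hmem : (Sum.inr j : Unit ⊕ Fin t) ∈ ε''.val := hz.1
      obtain ⟨j₂, _, hv₂⟩ := ew_val ε''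
      rw [hv₂] at hmem
      simp only [Sym2.mem_iff] at hmem
      rcases hmem with h | h
      · exact absurd h (by simp)
      · rcases Sum.inr_injective h with rfl
        have : ε'' = ε := Subtype.ext (by rw [hv₂, hεv])
        rw [this]
  · right
    have hmem : (vtx j : V1 t d) ∈ a.val := hz
    rcases edge_cases (hA a.2) with ⟨i, hi, hv⟩ | ⟨j₂, ε₂, hj₂, hv₂, hv⟩ | ⟨j₂, ε₂, hj₂, hv₂, hv⟩
    · exfalso
      rw [hv] at hmem
      simp only [Sym2.mem_iff] at hmem
      rcases hmem with h | h
      · exact absurd h (by simp)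
      · rcases Sum.inl_injective h with h'
        rcases Sum.inr_injective h' with rfl
        omega
    · exfalso
      rw [hv] at hmem
      simp only [Sym2.mem_iff] at hmem
      rcases hmem with h | h
      · exact absurd h (by simp)
      · exact absurd h (by simp)
    · rw [hv] at hmem
      simp only [Sym2.mem_iff] at hmem
      have hjj : j₂ = j := by
        rcases hmem with h | h
        · rcases Sum.inl_injective h with h'
          exact (Sum.inr_injective h').symm
        · exact absurd h (by simp)
      subst hjj
      have hee : ε₂ = ε := Subtype.ext (by rw [hv₂, hεv])
      subst hee
      exact ⟨hv ▸ a.2, congrArg Sum.inr (Subtype.ext hv)⟩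

lemma adj_eps (hA : ↑A ⊆ (woundedSpider t d).edgeSet) {j : Fin t} {ε : Ew t d}
    (hεv : ε.val = s(Sum.inl (), Sum.inr j))
    (z : V1 t d ⊕ {e : Sym2 (V1 t d) // e ∈ A})
    (hz : (subdivide (woundedSpider t d) A).Adj z (Sum.inl (Sum.inr ε))) :
    (z = Sum.inl X ∧ s(X, Sum.inr ε) ∉ A) ∨ z = Sum.inl (vtx j) ∨
      ∃ (y : Sym2 (V1 t d)) (hy : y ∈ A),
        (y = s(X, Sum.inr ε) ∨ y = s(vtx j, Sum.inr ε)) ∧ z = Sum.inr ⟨y, hy⟩ := by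
  rcases z with u | a
  · rcases u with a | ε''
    · have hmem : (a : Unit ⊕ Fin t) ∈ ε.val := hz.1
      rw [hεv] at hmem
      simp only [Sym2.mem_iff] at hmem
      rcases hmem with rfl | rfl
      · left
        exact ⟨rfl, hz.2⟩
      · exact Or.inr (Or.inl rfl)
    · exact absurd hz.1 (subdivide_adj_inr_inr _ _ _ _)
  · right; right
    have hmem : (Sum.inr ε : V1 t d) ∈ a.val := hz
    rcases edge_cases (hA a.2) with ⟨i, hi, hv⟩ | ⟨j₂, ε₂, hj₂, hv₂, hv⟩ | ⟨j₂, ε₂, hj₂, hv₂, hv⟩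
    · exfalso
      rw [hv] at hmem
      simp only [Sym2.mem_iff] at hmem
      rcases hmem with h | h <;> exact absurd h (by simp)
    · have hee : ε₂ = ε := by
        rw [hv] at hmem
        simp only [Sym2.mem_iff] at hmem
        rcases hmem with h | h
        · exact absurd h (by simp)
        · exact (Sum.inr_injective h).symm
      subst hee
      refine ⟨a.val, a.2, Or.inl hv, congrArg Sum.inr (Subtype.ext rfl)⟩
    · have hee : ε₂ = ε := by
        rw [hv] at hmem
        simp only [Sym2.mem_iff] at hmem
        rcases hmem with h | h
        · exact absurd h (by simp)
        · exact (Sum.inr_injective h).symm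
      subst hee
      have hjj : j₂ = j := by
        rw [hεv] at hv₂
        have := Sym2.congr_right.mp hv₂
        exact (Sum.inr_injective this).symm
      subst hjj
      exact ⟨a.val, a.2, Or.inr hv, congrArg Sum.inr (Subtype.ext rfl)⟩

lemma far_edge (hA : ↑A ⊆ (woundedSpider t d).edgeSet) {j : Fin t} {ε : Ew t d}
    (hj : d ≤ (j : ℕ)) (hεv : ε.val = s(Sum.inl (), Sum.inr j))
    (hsub : s(X, Sum.inr ε) ∈ A ∨ s(vtx j, Sum.inr ε) ∈ A) :
    ∃ (a2 b2 : V1 t d ⊕ {e : Sym2 (V1 t d) // e ∈ A}) (y : Sym2 (V1 t d)) (hy : y ∈ A),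
      (subdivide (woundedSpider t d) A).Adj a2 b2 ∧
      (y = s(X, Sum.inr ε) ∨ y = s(vtx j, Sum.inr ε)) ∧
      (s(vtx j, Sum.inr ε) ∈ A → y = s(vtx j, Sum.inr ε)) ∧
      ∀ z, (z = a2 ∨ (subdivide (woundedSpider t d) A).Adj z a2 ∨ z = b2 ∨
            (subdivide (woundedSpider t d) A).Adj z b2) →
        z = Sum.inl (Sum.inr ε) ∨ z = Sum.inl (vtx j) ∨ z = Sum.inr ⟨y, hy⟩ := by
  by_cases hbot : s(vtx j, Sum.inr ε) ∈ A
  · refine ⟨Sum.inr ⟨_, hbot⟩, Sum.inl (vtx j), _, hbot, ?_, Or.inr rfl, fun _ => rfl, ?_⟩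
    · simp
    · intro z hc
      rcases hc with rfl | hc | rfl | hc
      · exact Or.inr (Or.inr rfl)
      · rcases z with u | a
        · have hu : (u : V1 t d) ∈ s(vtx j, Sum.inr ε) := hc
          simp only [Sym2.mem_iff] at hu
          rcases hu with rfl | rfl
          · exact Or.inr (Or.inl rfl)
          · exact Or.inl rfl
        · exact absurd hc (subdivide_adj_inr_inr _ _ _ _)
      · exact Or.inr (Or.inl rfl)
      · rcases adj_vtx hA hj hεv z hc with rfl | ⟨hy2, rfl⟩
        · exact Or.inl rfl
        · exact Or.inr (Or.inr rfl)
  · have htop : s(X, Sum.inr ε) ∈ A := hsub.resolve_right hbot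
    refine ⟨Sum.inl (Sum.inr ε), Sum.inl (vtx j), _, htop, ?_, Or.inl rfl,
      fun hc => absurd hc hbot, ?_⟩
    · refine (subdivide_adj_inl_inl _ _ _ _).mpr ⟨?_, fun hc => hbot ?_⟩
      · refine (subdivide_adj_inr_inl _ _ _ _).mpr ?_
        rw [hεv]; simp
      · rwa [Sym2.eq_swap] at hc
    · intro z hc
      rcases hc with rfl | hc | rfl | hc
      · exact Or.inl rfl
      · rcases adj_eps hA hεv z hc with ⟨rfl, hnA⟩ | rfl | ⟨y', hy', hor, rfl⟩
        · exact absurd htop hnA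
        · exact Or.inr (Or.inl rfl)
        · rcases hor with h | h
          · exact Or.inr (Or.inr (congrArg Sum.inr (Subtype.ext h)))
          · exact absurd (h ▸ hy') hbot
      · exact Or.inr (Or.inl rfl)
      · rcases adj_vtx hA hj hεv z hc with rfl | ⟨hy2, rfl⟩
        · exact Or.inl rfl
        · exact absurd hy2 hbot

@[simp] lemma ws_adj_inl_inl (a b : Unit ⊕ Fin t) :
    (woundedSpider t d).Adj (Sum.inl a) (Sum.inl b) ↔
      (completeBipartiteGraph Unit (Fin t)).Adj a b ∧ s(a, b) ∉ woundedEdges t d := Iff.rfl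

@[simp] lemma ws_adj_inl_inr (a : Unit ⊕ Fin t) (e : Ew t d) :
    (woundedSpider t d).Adj (Sum.inl a) (Sum.inr e) ↔ a ∈ (e : Sym2 (Unit ⊕ Fin t)) := Iff.rfl

@[simp] lemma ws_adj_inr_inl (a : Unit ⊕ Fin t) (e : Ew t d) :
    (woundedSpider t d).Adj (Sum.inr e) (Sum.inl a) ↔ a ∈ (e : Sym2 (Unit ⊕ Fin t)) := Iff.rfl

@[simp] lemma ws_adj_inr_inr (e f : Ew t d) :
    ¬ (woundedSpider t d).Adj (Sum.inr e) (Sum.inr f) := fun h => h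

lemma not_singleton_isolating {V : Type*} {G : SimpleGraph V} {a1 b1 a2 b2 : V}
    (h1 : G.Adj a1 b1) (h2 : G.Adj a2 b2)
    (hd : ∀ z, (z = a1 ∨ G.Adj z a1 ∨ z = b1 ∨ G.Adj z b1) →
          (z = a2 ∨ G.Adj z a2 ∨ z = b2 ∨ G.Adj z b2) → False) :
    ∀ v, ¬ IsIsolating G {v} := by
  intro v hv
  simp only [IsIsolating, inClosedNbhd] at hv
  have g1 : v = a1 ∨ G.Adj v a1 ∨ v = b1 ∨ G.Adj v b1 := by
    rcases hv a1 b1 h1 with ⟨w, hw, h⟩ | ⟨w, hw, h⟩ <;>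
      rcases Set.mem_singleton_iff.mp hw with rfl
    · rcases h with rfl | h
      · exact Or.inl rfl
      · exact Or.inr (Or.inl h)
    · rcases h with rfl | h
      · exact Or.inr (Or.inr (Or.inl rfl))
      · exact Or.inr (Or.inr (Or.inr h))
  have g2 : v = a2 ∨ G.Adj v a2 ∨ v = b2 ∨ G.Adj v b2 := by
    rcases hv a2 b2 h2 with ⟨w, hw, h⟩ | ⟨w, hw, h⟩ <;>
      rcases Set.mem_singleton_iff.mp hw with rfl
    · rcases h with rfl | h
      · exact Or.inl rfl
      · exact Or.inr (Or.inl h)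
    · rcases h with rfl | h
      · exact Or.inr (Or.inr (Or.inl rfl))
      · exact Or.inr (Or.inr (Or.inr h))
  exact hd v g1 g2

lemma two_legs (hA : ↑A ⊆ (woundedSpider t d).edgeSet) {j : Fin t} {ε : Ew t d}
    (hj : d ≤ (j : ℕ)) (hεv : ε.val = s(Sum.inl (), Sum.inr j))
    (hsub : s(X, Sum.inr ε) ∈ A ∨ s(vtx j, Sum.inr ε) ∈ A)
    {j' : Fin t} {ε' : Ew t d}
    (hεv' : ε'.val = s(Sum.inl (), Sum.inr j')) (hne : j ≠ j') :
    ∀ v, ¬ IsIsolating (subdivide (woundedSpider t d) A) {v} := by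
  obtain ⟨a2, b2, y, hy, h2, hyor, -, cov⟩ := far_edge hA hj hεv hsub
  by_cases hb' : s(vtx j', Sum.inr ε') ∈ A
  · refine not_singleton_isolating (a1 := Sum.inr ⟨_, hb'⟩) (b1 := Sum.inl (vtx j'))
      (by simp) h2 ?_
    intro z c1 c2
    rcases cov z c2 with rfl | rfl | rfl <;> clear cov hA hsub h2 <;>
      rcases hyor with rfl | rfl <;>
      rcases c1 with h | h | h | h <;>
      simp_all [Sym2.eq_iff, Subtype.ext_iff, hεv, hεv'] <;>
      simp_all [Fin.ext_iff]
  · refine not_singleton_isolating (a1 := Sum.inl (Sum.inr ε')) (b1 := Sum.inl (vtx j'))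
      ?_ h2 ?_
    · refine (subdivide_adj_inl_inl _ _ _ _).mpr ⟨?_, fun hc => hb' ?_⟩
      · refine (subdivide_adj_inr_inl _ _ _ _).mpr ?_
        rw [hεv']; simp
      · rwa [Sym2.eq_swap] at hc
    · intro z c1 c2
      rcases cov z c2 with rfl | rfl | rfl <;> clear cov hA hsub h2 <;>
        rcases hyor with rfl | rfl <;>
        rcases c1 with h | h | h | h <;>
        simp_all [Sym2.eq_iff, Subtype.ext_iff, hεv, hεv'] <;>
        simp_all [Fin.ext_iff]


lemma short_leg (hA : ↑A ⊆ (woundedSpider t d).edgeSet) {j : Fin t} {ε : Ew t d}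
    (hj : d ≤ (j : ℕ)) (hεv : ε.val = s(Sum.inl (), Sum.inr j))
    (hsub : s(X, Sum.inr ε) ∈ A ∨ s(vtx j, Sum.inr ε) ∈ A)
    {i : Fin t} (hi : (i : ℕ) < d) (hsh : s(X, vtx i) ∈ A) :
    ∀ v, ¬ IsIsolating (subdivide (woundedSpider t d) A) {v} := by
  obtain ⟨a2, b2, y, hy, h2, hyor, -, cov⟩ := far_edge hA hj hεv hsub
  refine not_singleton_isolating (a1 := Sum.inr ⟨_, hsh⟩) (b1 := Sum.inl (vtx i))
    (by simp) h2 ?_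
  intro z c1 c2
  have hij : j ≠ i := by
    intro h
    rw [h] at hj
    omega
  rcases cov z c2 with rfl | rfl | rfl <;> clear cov hA hsub h2 <;>
    rcases hyor with rfl | rfl <;>
    rcases c1 with h | h | h | h <;>
    simp_all [Sym2.eq_iff, Subtype.ext_iff, hεv] <;>
    first
      | (simp_all [Fin.ext_iff]; omega)
      | omega

lemma case_b (hA : ↑A ⊆ (woundedSpider t d).edgeSet) {j : Fin t} {ε : Ew t d}
    (hj : d ≤ (j : ℕ)) (hεv : ε.val = s(Sum.inl (), Sum.inr j))
    (hbot : s(vtx j, Sum.inr ε) ∈ A) (htop : s(X, Sum.inr ε) ∈ A)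
    {i0 : Fin t} (hi0 : (i0 : ℕ) < d) (hsh : s(X, vtx i0) ∉ A) :
    ∀ v, ¬ IsIsolating (subdivide (woundedSpider t d) A) {v} := by
  obtain ⟨a2, b2, y, hy, h2, hyor, hybot, cov⟩ := far_edge hA hj hεv (Or.inr hbot)
  have hyb := hybot hbot
  subst hyb
  have htop' : s(Sum.inr ε, X (t := t) (d := d)) ∈ A := by rwa [Sym2.eq_swap]
  have hw' : s((Sum.inr j : Unit ⊕ Fin t), (Sum.inl () : Unit ⊕ Fin t)) ∈ woundedEdges t d := by
    rw [Sym2.eq_swap, mem_woundedEdges]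
    exact ⟨j, hj, rfl⟩
  refine not_singleton_isolating (a1 := Sum.inl (X (t := t) (d := d)))
    (b1 := Sum.inl (vtx i0)) ?_ h2 ?_
  · refine (subdivide_adj_inl_inl _ _ _ _).mpr ⟨?_, hsh⟩
    refine (ws_adj_inl_inl _ _).mpr ⟨by simp, fun hc => ?_⟩
    rw [mem_woundedEdges] at hc
    obtain ⟨i, hi, hik⟩ := hc
    rw [Sym2.eq_iff] at hik
    rcases hik with ⟨-, h⟩ | ⟨h, -⟩
    · have := congrArg (fun x : Unit ⊕ Fin t => x.getRight?) h
      simp at this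
      rw [this] at hi
      omega
    · exact absurd h (by simp)
  · intro z c1 c2
    have hij : j ≠ i0 := by
      intro h
      rw [h] at hj
      omega
    rcases cov z c2 with rfl | rfl | rfl <;> clear cov hA h2 hybot <;>
      rcases c1 with h | h | h | h <;>
      simp_all [Sym2.eq_iff, Subtype.ext_iff, hεv] <;>
      first
        | (simp_all [Fin.ext_iff]; omega)
        | omega

lemma part1 (hd1 : 1 ≤ d)
    (hA : ↑A ⊆ (woundedSpider t d).edgeSet) (hcard : A.card = d + 1) :
    ∀ v, ¬ IsIsolating (subdivide (woundedSpider t d) A) {v} := by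
  classical
  have hshorts : ¬ A ⊆ Finset.image (fun i : Fin t => s(X (t := t) (d := d), vtx i))
      (Finset.univ.filter fun i : Fin t => (i : ℕ) < d) := by
    intro hss
    have h1 := Finset.card_le_card hss
    have h2 := Finset.card_image_le (s := Finset.univ.filter fun i : Fin t => (i : ℕ) < d)
      (f := fun i : Fin t => s(X (t := t) (d := d), vtx i))
    have h3 : (Finset.univ.filter fun i : Fin t => (i : ℕ) < d).card ≤ (Finset.range d).card := by
      refine Finset.card_le_card_of_injOn (fun i => (i : ℕ)) ?_ ?_
      · intro i hi
        simp only [Finset.mem_coe, Finset.mem_filter] at hi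
        simp [hi.2]
      · intro i _ i' _ h
        exact Fin.val_injective h
    rw [Finset.card_range] at h3
    omega
  obtain ⟨e, heA, hesh⟩ := Finset.not_subset.mp hshorts
  have hlong : ∃ (j : Fin t) (ε : Ew t d), d ≤ (j : ℕ) ∧ ε.val = s(Sum.inl (), Sum.inr j) ∧
      (s(X, Sum.inr ε) ∈ A ∨ s(vtx j, Sum.inr ε) ∈ A) := by
    rcases edge_cases (hA heA) with ⟨i, hi, rfl⟩ | ⟨j, ε, hj, hεv, rfl⟩ | ⟨j, ε, hj, hεv, rfl⟩
    · exact absurd (Finset.mem_image.mpr ⟨i, by simp [hi], rfl⟩) hesh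
    · exact ⟨j, ε, hj, hεv, Or.inl heA⟩
    · exact ⟨j, ε, hj, hεv, Or.inr heA⟩
  obtain ⟨j, ε, hj, hεv, hsub⟩ := hlong
  by_cases hA2 : ∃ i : Fin t, (i : ℕ) < d ∧ s(X (t := t) (d := d), vtx i) ∈ A
  · obtain ⟨i, hi, hsho⟩ := hA2
    exact short_leg hA hj hεv hsub hi hsho
  push_neg at hA2
  by_cases hA1 : ∃ j' : Fin t, d ≤ (j' : ℕ) ∧ j' ≠ j
  · obtain ⟨j', hj', hnej⟩ := hA1
    have hmem : s((Sum.inl () : Unit ⊕ Fin t), Sum.inr j') ∈ woundedEdges t d := by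
      rw [mem_woundedEdges]
      exact ⟨j', hj', rfl⟩
    exact two_legs hA hj hεv hsub (ε' := ⟨_, hmem⟩) rfl (fun h => hnej (h.symm))
  · push_neg at hA1
    have hAsub : A ⊆ {s(X, Sum.inr ε), s(vtx j, Sum.inr ε)} := by
      intro e' he'
      rcases edge_cases (hA he') with ⟨i, hi, rfl⟩ | ⟨j₂, ε₂, hj₂, hv₂, rfl⟩ |
        ⟨j₂, ε₂, hj₂, hv₂, rfl⟩
      · exact absurd he' (hA2 i hi)
      · have hjj := hA1 j₂ hj₂
        subst hjj
        have hee : ε₂ = ε := Subtype.ext (hv₂.trans hεv.symm)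
        subst hee
        simp
      · have hjj := hA1 j₂ hj₂
        subst hjj
        have hee : ε₂ = ε := Subtype.ext (hv₂.trans hεv.symm)
        subst hee
        simp
    have hc2 : A.card ≤ 2 := by
      refine le_trans (Finset.card_le_card hAsub) ?_
      refine le_trans (Finset.card_insert_le _ _) ?_
      simp
    have hpair : ({s(X, Sum.inr ε), s(vtx j, Sum.inr ε)} : Finset (Sym2 (V1 t d))).card ≤ 2 :=
      le_trans (Finset.card_insert_le _ _) (by simp)
    have hAeq : A = {s(X, Sum.inr ε), s(vtx j, Sum.inr ε)} :=
      Finset.eq_of_subset_of_card_le hAsub (by omega)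
    have htop : s(X, Sum.inr ε) ∈ A := by rw [hAeq]; simp
    have hbot : s(vtx j, Sum.inr ε) ∈ A := by rw [hAeq]; simp
    exact case_b hA hj hεv hbot htop (i0 := ⟨0, lt_of_le_of_lt (Nat.zero_le _) j.isLt⟩)
      (by simp; omega) (hA2 _ (by simp; omega))

lemma isolating_X : IsIsolating (woundedSpider t d) ({X} : Set (V1 t d)) := by
  intro u v huv
  rcases u with a | ε
  · rcases v with b | ε'
    · rcases a with ⟨⟩ | i
      · exact Or.inl ⟨X, rfl, Or.inl rfl⟩
      · rcases b with ⟨⟩ | i'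
        · exact Or.inr ⟨X, rfl, Or.inl rfl⟩
        · exact absurd huv.1 (by simp)
    · refine Or.inr ⟨X, rfl, Or.inr ?_⟩
      obtain ⟨j, hj, hv⟩ := ew_val ε'
      refine (ws_adj_inl_inr _ _).mpr ?_
      rw [hv]; simp
  · refine Or.inl ⟨X, rfl, Or.inr ?_⟩
    obtain ⟨j, hj, hv⟩ := ew_val ε
    refine (ws_adj_inl_inr _ _).mpr ?_
    rw [hv]; simp

lemma adj_X_vtx {i : Fin t} (hi : (i : ℕ) < d) :
    (woundedSpider t d).Adj X (vtx i) := by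
  refine (ws_adj_inl_inl _ _).mpr ⟨by simp, fun hc => ?_⟩
  rw [mem_woundedEdges] at hc
  obtain ⟨i', hi', hik⟩ := hc
  rw [Sym2.eq_iff] at hik
  rcases hik with ⟨-, h⟩ | ⟨h, -⟩
  · rw [Sum.inr_injective h] at hi'
    omega
  · exact absurd h (by simp)

lemma iso_spider (hd1 : 1 ≤ d) (ht : 1 ≤ t) : iso (woundedSpider t d) = 1 := by
  refine iso_eq_one _ isolating_X (adj_X_vtx (i := ⟨0, by omega⟩) ?_)
  simp; omega

lemma part2 (ht : 2 ≤ t) (hd1 : 1 ≤ d) (hd2 : d ≤ t - 1) :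
    ∃ A' : Finset (Sym2 (V1 t d)), ↑A' ⊆ (woundedSpider t d).edgeSet ∧ A'.card = d ∧
      iso (subdivide (woundedSpider t d) A') = 1 := by
  classical
  refine ⟨Finset.image (fun i : Fin t => s(X (t := t) (d := d), vtx i))
    (Finset.univ.filter fun i : Fin t => (i : ℕ) < d), ?_, ?_, ?_⟩
  · intro e he
    simp only [Finset.coe_image, Set.mem_image, Finset.mem_coe, Finset.mem_filter] at he
    obtain ⟨i, ⟨-, hi⟩, rfl⟩ := he
    exact (adj_X_vtx hi)
  · rw [Finset.card_image_of_injOn]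
    · have hbd : d < t := by omega
      have : (Finset.univ.filter fun i : Fin t => (i : ℕ) < d) = Finset.Iio (⟨d, hbd⟩ : Fin t) := by
        ext i
        simp [Fin.lt_def]
      rw [this, Fin.card_Iio]
    · intro i _ i' _ h
      rw [Sym2.eq_iff] at h
      rcases h with ⟨-, h⟩ | ⟨h, -⟩
      · exact Sum.inr_injective (Sum.inl_injective h)
      · exact absurd h (by simp)
  · set A' := Finset.image (fun i : Fin t => s(X (t := t) (d := d), vtx i))
      (Finset.univ.filter fun i : Fin t => (i : ℕ) < d) with hA'
    have hXadj : ∀ ε : Ew t d,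
        (subdivide (woundedSpider t d) A').Adj (Sum.inl X) (Sum.inl (Sum.inr ε)) := by
      intro ε
      refine (subdivide_adj_inl_inl _ _ _ _).mpr ⟨?_, ?_⟩
      · obtain ⟨j, hj, hv⟩ := ew_val ε
        refine (ws_adj_inl_inr _ _).mpr ?_
        rw [hv]; simp
      · intro hc
        rw [hA', Finset.mem_image] at hc
        obtain ⟨i, -, hik⟩ := hc
        rw [Sym2.eq_iff] at hik
        rcases hik with ⟨-, h⟩ | ⟨-, h⟩ <;> exact absurd h (by simp)
    have hiso : IsIsolating (subdivide (woundedSpider t d) A')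
        ({Sum.inl X} : Set (V1 t d ⊕ {e : Sym2 (V1 t d) // e ∈ A'})) := by
      intro u v huv
      rcases v with v | a
      · rcases u with u | a
        · have hT := huv.1
          rcases u with b | εu
          · rcases v with b' | εv
            · rcases b with ⟨⟩ | i
              · exact Or.inl ⟨Sum.inl X, rfl, Or.inl rfl⟩
              · rcases b' with ⟨⟩ | i'
                · exact Or.inr ⟨Sum.inl X, rfl, Or.inl rfl⟩
                · exact absurd hT.1 (by simp)
            · exact Or.inr ⟨Sum.inl X, rfl, Or.inr (hXadj εv)⟩
          · exact Or.inl ⟨Sum.inl X, rfl, Or.inr (hXadj εu)⟩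
        · refine Or.inl ⟨Sum.inl X, rfl, Or.inr ?_⟩
          refine (subdivide_adj_inl_inr _ _ _ _).mpr ?_
          obtain ⟨i, -, hik⟩ := Finset.mem_image.mp a.2
          have hx : (X : V1 t d) ∈ s(X (t := t) (d := d), vtx i) := by simp
          rwa [hik] at hx
      · refine Or.inr ⟨Sum.inl X, rfl, Or.inr ?_⟩
        refine (subdivide_adj_inl_inr _ _ _ _).mpr ?_
        obtain ⟨i, -, hik⟩ := Finset.mem_image.mp a.2
        have hx : (X : V1 t d) ∈ s(X (t := t) (d := d), vtx i) := by simp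
        rwa [hik] at hx
    have hedge : (subdivide (woundedSpider t d) A').Adj (Sum.inl X)
        (Sum.inr ⟨s(X, vtx ⟨0, by omega⟩), by
          rw [hA', Finset.mem_image]
          exact ⟨⟨0, by omega⟩, by simp; omega, rfl⟩⟩) := by
      refine (subdivide_adj_inl_inr _ _ _ _).mpr ?_
      simp
    exact iso_eq_one _ hiso hedge

theorem stmt7 (t d : ℕ) (ht : 2 ≤ t) (hd1 : 1 ≤ d) (hd2 : d ≤ t - 1) :
    IotaCritical (woundedSpider t d) (d + 1) := by
  have hisoT : iso (woundedSpider t d) = 1 := iso_spider hd1 (by omega)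
  constructor
  · intro A hsubA hcardA
    rw [hisoT]
    have h2 := two_le_iso (subdivide (woundedSpider t d) A) (part1 hd1 hsubA hcardA)
    omega
  · obtain ⟨A', h1, h2, h3⟩ := part2 ht hd1 hd2
    exact ⟨A', h1, by simpa using h2, h3.trans hisoT.symm⟩
end

section
/- If a graph G has a critical tripartition (A, B, C), then the distance between any two vertices of A ∪ C is even, and every leaf of G belongs to C. -/
open SimpleGraph

/-- `(A, B, C)` is a critical tripartition of `G`. -/
def CriticalTripartition {V : Type*} (G : SimpleGraph V) (A B C : Set V) : Prop :=
  A.Nonempty ∧ B.Nonempty ∧ C.Nonempty ∧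
  (∀ v : V, v ∈ A ∨ v ∈ B ∨ v ∈ C) ∧
  Disjoint A B ∧ Disjoint A C ∧ Disjoint B C ∧
  (∀ u ∈ A ∪ C, ∀ v ∈ A ∪ C, ¬ G.Adj u v) ∧
  (∀ u ∈ B, ∀ v ∈ B, ¬ G.Adj u v) ∧
  {v | ∃ a ∈ A, G.Adj a v} = B ∧
  {v | ∃ c ∈ C, G.Adj c v} = B ∧
  (∀ x ∈ A, ∀ y ∈ A, x ≠ y → ∀ p : G.Walk x y, 3 < p.length) ∧
  (∀ a ∈ A, ¬ ∃! u, G.Adj a u)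

theorem stmt13 {V : Type*} (G : SimpleGraph V) (A B C : Set V)
    (h : CriticalTripartition G A B C) :
    (∀ u ∈ A ∪ C, ∀ v ∈ A ∪ C, Even (G.dist u v)) ∧
    (∀ v : V, (∃! u, G.Adj v u) → v ∈ C) := by

  classical
  obtain ⟨hA, hB, hC, htot, hAB, hAC, hBC, hICac, hICb, hNA, hNC, hpack, hleaf⟩ := h
  -- every edge joins B with its complement
  have hedge : ∀ {x y : V}, G.Adj x y → (x ∈ B ↔ y ∉ B) := by
    intro x y hxy
    constructor
    · intro hx hy; exact hICb x hx y hy hxy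
    · intro hy
      by_contra hx
      have hxAC : x ∈ A ∪ C := by
        rcases htot x with h1 | h1 | h1
        · exact Or.inl h1
        · exact absurd h1 hx
        · exact Or.inr h1
      have hyAC : y ∈ A ∪ C := by
        rcases htot y with h1 | h1 | h1
        · exact Or.inl h1
        · exact absurd h1 hy
        · exact Or.inr h1
      exact hICac x hxAC y hyAC hxy
  have hparity : ∀ {u v : V} (p : G.Walk u v), (Even p.length ↔ (u ∈ B ↔ v ∈ B)) := by
    intro u v p
    induction p with
    | nil => simp
    | cons hadj p ih =>
        rename_i a b c
        have he := hedge hadj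
        simp only [SimpleGraph.Walk.length_cons, Nat.even_add_one]
        rw [ih] at *
        tauto
  have hnotB : ∀ u ∈ A ∪ C, u ∉ B := by
    intro u hu
    rcases hu with hu | hu
    · exact fun hb => hAB.le_bot ⟨hu, hb⟩ 
    · exact fun hb => hBC.le_bot ⟨hb, hu⟩ 
  constructor
  · intro u hu v hv
    by_cases hr : G.Reachable u v
    · obtain ⟨p, hp⟩ := hr.exists_walk_length_eq_dist
      rw [← hp]
      rw [hparity p]
      simp [hnotB u hu, hnotB v hv]
    · rw [SimpleGraph.dist_eq_zero_of_not_reachable hr]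
      exact Even.zero
  · intro v hv
    rcases htot v with h1 | h1 | h1
    · exact absurd hv (hleaf v h1)
    · exfalso
      have ha : ∃ a ∈ A, G.Adj a v := (Set.ext_iff.mp hNA v).mpr h1
      have hc : ∃ c ∈ C, G.Adj c v := (Set.ext_iff.mp hNC v).mpr h1
      obtain ⟨a, haA, haAdj⟩ := ha
      obtain ⟨c, hcC, hcAdj⟩ := hc
      have : a = c := by
        obtain ⟨u, -, huniq⟩ := hv
        rw [huniq a haAdj.symm, huniq c hcAdj.symm]
      exact hAC.le_bot ⟨haA, this ▸ hcC⟩ 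
    · exact h1
end

section
/- If G is a connected (ι,1)-critical graph and D is a minimum isolating set of G, then N(D) is an independent set of G. -/
open SimpleGraph

lemma sub_isolating {V : Type*} (G : SimpleGraph V)
    (D : Finset V) (hiso : IsIsolating G ↑D) (a b : V)
    (hP : ∀ x, x = a ∨ x = b → x ∈ D ∨ ∃ d ∈ D, G.Adj d x ∧ s(d, x) ≠ s(a, b)) :
    IsIsolating (subdivide G {s(a, b)})
      ↑(D.map ⟨Sum.inl, Sum.inl_injective⟩ :
        Finset (V ⊕ {e : Sym2 V // e ∈ ({s(a, b)} : Finset (Sym2 V))})) := by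
  set A : Finset (Sym2 V) := {s(a, b)} with hA
  set C : Finset (V ⊕ {e : Sym2 V // e ∈ A}) := D.map ⟨Sum.inl, Sum.inl_injective⟩ with hC
  have memmap : ∀ d : V, d ∈ D → (Sum.inl d : V ⊕ {e : Sym2 V // e ∈ A}) ∈ (↑C : Set _) := by
    intro d hd
    simp [hC]
    exact hd
  have hcov : ∀ x, x = a ∨ x = b → inClosedNbhd (subdivide G A) ↑C (Sum.inl x) := by
    intro x hx
    rcases hP x hx with hxD | ⟨d, hd, hadj, hne⟩
    · exact ⟨Sum.inl x, memmap x hxD, Or.inl rfl⟩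
    · refine ⟨Sum.inl d, memmap d hd, Or.inr ?_⟩
      show G.Adj d x ∧ s(d, x) ∉ A
      exact ⟨hadj, by simpa [hA] using hne⟩
  have cover_of : ∀ z : V, inClosedNbhd G ↑D z → inClosedNbhd (subdivide G A) ↑C (Sum.inl z) := by
    rintro z ⟨d, hd, h⟩
    rw [Finset.mem_coe] at hd
    rcases h with rfl | hdz
    · exact ⟨Sum.inl d, memmap d hd, Or.inl rfl⟩
    · by_cases hf : s(d, z) = s(a, b)
      · apply hcov z
        rcases Sym2.eq_iff.mp hf with ⟨_, rfl⟩ | ⟨_, rfl⟩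
        · exact Or.inr rfl
        · exact Or.inl rfl
      · refine ⟨Sum.inl d, memmap d hd, Or.inr ?_⟩
        show G.Adj d z ∧ s(d, z) ∉ A
        exact ⟨hdz, by simpa [hA] using hf⟩
  rintro (x | e) (y | e) hxy
  · have hxy' : G.Adj x y ∧ s(x, y) ∉ A := hxy
    rcases hiso x y hxy'.1 with h | h
    · exact Or.inl (cover_of x h)
    · exact Or.inr (cover_of y h)
  · left
    have hx : x ∈ (e : Sym2 V) := hxy
    have he : (e : Sym2 V) = s(a, b) := Finset.mem_singleton.mp e.2
    apply hcov x
    rw [he, Sym2.mem_iff] at hx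
    exact hx
  · right
    have hy : y ∈ (e : Sym2 V) := hxy
    have he : (e : Sym2 V) = s(a, b) := Finset.mem_singleton.mp e.2
    apply hcov y
    rw [he, Sym2.mem_iff] at hy
    exact hy
  · exact hxy.elim

theorem stmt16 {V : Type*} [Fintype V] (G : SimpleGraph V) (hconn : G.Connected)
    (hcrit : ∀ e ∈ G.edgeSet, iso G < iso (subdivide G {e}))
    (D : Finset V) (hiso : IsIsolating G ↑D) (hmin : D.card = iso G) :
    ∀ u v : V, (∃ d ∈ D, G.Adj d u) → (∃ d ∈ D, G.Adj d v) → ¬ G.Adj u v := by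
  intro u v hu hv huv
  obtain ⟨du, hduD, hdu⟩ := hu
  obtain ⟨dv, hdvD, hdv⟩ := hv
  have key : ∀ a b : V, G.Adj a b →
      (∀ x, x = a ∨ x = b → x ∈ D ∨ ∃ d ∈ D, G.Adj d x ∧ s(d, x) ≠ s(a, b)) → False := by
    intro a b hab hP
    have h1 := hcrit s(a, b) (G.mem_edgeSet.mpr hab)
    have h2 : iso (subdivide G {s(a, b)}) ≤ D.card := by
      apply Nat.sInf_le
      exact ⟨D.map ⟨Sum.inl, Sum.inl_injective⟩, by simp,
        sub_isolating G D hiso a b hP⟩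
    omega
  by_cases huD : u ∈ D
  · exact key du u hdu (fun x hx => Or.inl (by rcases hx with rfl | rfl; exacts [hduD, huD]))
  by_cases hvD : v ∈ D
  · exact key dv v hdv (fun x hx => Or.inl (by rcases hx with rfl | rfl; exacts [hdvD, hvD]))
  · refine key u v huv ?_
    rintro x (rfl | rfl)
    · refine Or.inr ⟨du, hduD, hdu, ?_⟩
      intro hf
      rcases Sym2.eq_iff.mp hf with ⟨h1, h2⟩ | ⟨h1, _⟩
      · exact G.irrefl (h1 ▸ hdu)
      · exact hvD (h1 ▸ hduD)
    · refine Or.inr ⟨dv, hdvD, hdv, ?_⟩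
      intro hf
      rcases Sym2.eq_iff.mp hf with ⟨h1, _⟩ | ⟨h1, h2⟩
      · exact huD (h1 ▸ hdvD)
      · exact G.irrefl (h1 ▸ hdv)
end

section
/- If G is a connected (ι,1)-critical graph with a minimum isolating set D of size |D| ≥ 2, then for every x ∈ D there exists y ∈ D \ {x} with d_G(x,y) = 4. -/
open SimpleGraph

section Helpers

variable {V : Type*}

/-- If both endpoints of an edge `uv` are "safely covered" (covered by a vertex of `D`
not only through the edge `uv` itself), then `D`, lifted to the left summand, isolates
the subdivision of `G` at `uv`. -/
lemma lift_isolating (G : SimpleGraph V) (D : Finset V)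
    (hiso : IsIsolating G ↑D) {u v : V} (huv : G.Adj u v)
    (hu : ∃ d ∈ D, d = u ∨ (G.Adj d u ∧ d ≠ v))
    (hv : ∃ d ∈ D, d = v ∨ (G.Adj d v ∧ d ≠ u)) :
    IsIsolating (subdivide G {s(u,v)})
      ↑(D.map ⟨Sum.inl, Sum.inl_injective⟩ :
        Finset (V ⊕ {e : Sym2 V // e ∈ ({s(u,v)} : Finset (Sym2 V))})) := by
  set A : Finset (Sym2 V) := {s(u,v)} with hA
  set D' := (D.map ⟨Sum.inl, Sum.inl_injective⟩ : Finset (V ⊕ {e : Sym2 V // e ∈ A}))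
  have hmem : ∀ d ∈ D, (Sum.inl d : V ⊕ {e : Sym2 V // e ∈ A}) ∈ (↑D' : Set _) := by
    intro d hd
    simp only [D', Finset.coe_map, Set.mem_image, Finset.mem_coe]
    exact ⟨d, hd, rfl⟩
  -- from a "safe cover" we get closed-neighbourhood membership in the subdivision
  have cov : ∀ a : V, (∃ d ∈ D, d = a ∨ (G.Adj d a ∧ s(d,a) ≠ s(u,v))) →
      inClosedNbhd (subdivide G A) ↑D' (Sum.inl a) := by
    rintro a ⟨d, hd, h | ⟨hadj, hne⟩⟩
    · exact ⟨Sum.inl d, hmem d hd, Or.inl (by rw [h])⟩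
    · refine ⟨Sum.inl d, hmem d hd, Or.inr ?_⟩
      show G.Adj d a ∧ s(d,a) ∉ A
      exact ⟨hadj, by simp [hA, hne]⟩
  -- the hypotheses hu, hv give safe covers at u and v
  have covu : inClosedNbhd (subdivide G A) ↑D' (Sum.inl u) := by
    obtain ⟨d, hd, h | ⟨hadj, hne⟩⟩ := hu
    · exact cov u ⟨d, hd, Or.inl h⟩
    · refine cov u ⟨d, hd, Or.inr ⟨hadj, ?_⟩⟩
      intro hcon
      rcases Sym2.eq_iff.mp hcon with ⟨hd1, hd2⟩ | ⟨hd1, hd2⟩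
      · exact G.ne_of_adj huv hd2
      · exact hne hd1
  have covv : inClosedNbhd (subdivide G A) ↑D' (Sum.inl v) := by
    obtain ⟨d, hd, h | ⟨hadj, hne⟩⟩ := hv
    · exact cov v ⟨d, hd, Or.inl h⟩
    · refine cov v ⟨d, hd, Or.inr ⟨hadj, ?_⟩⟩
      intro hcon
      rcases Sym2.eq_iff.mp hcon with ⟨hd1, hd2⟩ | ⟨hd1, hd2⟩
      · exact hne hd1
      · exact G.ne_of_adj huv hd2.symm
  -- any plainly covered vertex is covered in the subdivision
  have covG : ∀ a : V, (∃ d ∈ D, d = a ∨ G.Adj d a) →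
      inClosedNbhd (subdivide G A) ↑D' (Sum.inl a) := by
    intro a ha
    by_cases hau : a = u
    · exact hau ▸ covu
    by_cases hav : a = v
    · exact hav ▸ covv
    obtain ⟨d, hd, h | hadj⟩ := ha
    · exact cov a ⟨d, hd, Or.inl h⟩
    · refine cov a ⟨d, hd, Or.inr ⟨hadj, ?_⟩⟩
      intro hcon
      rcases Sym2.eq_iff.mp hcon with ⟨hd1, hd2⟩ | ⟨hd1, hd2⟩
      · exact hav hd2
      · exact hau hd2
  rintro (a | e) (b | f) hadj
  · have hab : G.Adj a b := hadj.1
    rcases hiso a b hab with h | h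
    · exact Or.inl (covG a h)
    · exact Or.inr (covG b h)
  · -- a is an endpoint of the subdivided edge
    have hf : (f : Sym2 V) = s(u,v) := Finset.mem_singleton.mp f.2
    have ha : a ∈ s(u,v) := hf ▸ (hadj : a ∈ (f : Sym2 V))
    rcases Sym2.mem_iff.mp ha with h | h
    · exact Or.inl (h ▸ covu)
    · exact Or.inl (h ▸ covv)
  · have he : (e : Sym2 V) = s(u,v) := Finset.mem_singleton.mp e.2
    have hb : b ∈ s(u,v) := he ▸ (hadj : b ∈ (e : Sym2 V))
    rcases Sym2.mem_iff.mp hb with h | h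
    · exact Or.inr (h ▸ covu)
    · exact Or.inr (h ▸ covv)
  · exact hadj.elim

lemma no_lift [Fintype V] (G : SimpleGraph V)
    (hcrit : ∀ e ∈ G.edgeSet, iso G < iso (subdivide G {e}))
    (D : Finset V) (hiso : IsIsolating G ↑D) (hmin : D.card = iso G)
    {u v : V} (huv : G.Adj u v)
    (hu : ∃ d ∈ D, d = u ∨ (G.Adj d u ∧ d ≠ v))
    (hv : ∃ d ∈ D, d = v ∨ (G.Adj d v ∧ d ≠ u)) : False := by
  have h1 := lift_isolating G D hiso huv hu hv
  have h2 : iso (subdivide G {s(u,v)}) ≤ D.card :=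
    Nat.sInf_le ⟨D.map ⟨Sum.inl, Sum.inl_injective⟩, Finset.card_map _, h1⟩
  have h3 := hcrit s(u,v) (G.mem_edgeSet.mpr huv)
  omega

/-- On a shortest path, one can step back one vertex. -/
lemma step_back (G : SimpleGraph V) {x c : V} (h : 1 ≤ G.dist x c) :
    ∃ b, G.Adj b c ∧ G.dist x b + 1 = G.dist x c := by
  obtain ⟨w, hw⟩ := exists_walk_of_dist_ne_zero (by omega : G.dist x c ≠ 0)
  have hw' : w.reverse.length = G.dist x c := by rw [SimpleGraph.Walk.length_reverse]; exact hw
  cases hrev : w.reverse with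
  | nil =>
    rw [hrev] at hw'; simp only [SimpleGraph.Walk.length_nil] at hw'; omega
  | cons hadj p =>
    rename_i b
    rw [hrev] at hw'
    simp only [SimpleGraph.Walk.length_cons] at hw'
    refine ⟨b, hadj.symm, ?_⟩
    have h1 : G.dist x b ≤ p.length := by
      have := SimpleGraph.dist_le p.reverse
      rwa [SimpleGraph.Walk.length_reverse] at this
    have h2 : G.dist x c ≤ G.dist x b + 1 := by
      have hreach : G.Reachable x b := ⟨p.reverse⟩
      obtain ⟨q, hq⟩ := hreach.exists_walk_length_eq_dist
      have := SimpleGraph.dist_le (q.concat hadj.symm)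
      rwa [SimpleGraph.Walk.length_concat, hq] at this
    omega

/-- There is a vertex at each distance up to `G.dist x y`. -/
lemma exists_dist_eq' (G : SimpleGraph V) (x : V) :
    ∀ n : ℕ, ∀ y : V, G.dist x y = n → ∀ k ≤ n, ∃ z, G.dist x z = k := by
  intro n
  induction n with
  | zero =>
    intro y _ k hk
    obtain rfl := Nat.le_zero.mp hk
    exact ⟨x, SimpleGraph.dist_self⟩
  | succ m ih =>
    intro y hy k hk
    rcases Nat.lt_or_ge k (m+1) with h | h
    · obtain ⟨b, hadj, hb⟩ := step_back G (x := x) (c := y) (by omega)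
      exact ih b (by omega) k (by omega)
    · exact ⟨y, by omega⟩

end Helpers

theorem stmt17 {V : Type*} [Fintype V] (G : SimpleGraph V) (hconn : G.Connected)
    (hcrit : ∀ e ∈ G.edgeSet, iso G < iso (subdivide G {e}))
    (D : Finset V) (hiso : IsIsolating G ↑D) (hmin : D.card = iso G)
    (hD : 2 ≤ D.card) :
    ∀ x ∈ D, ∃ y ∈ D, y ≠ x ∧ G.dist x y = 4 := by
  intro x hx
  by_contra hcon
  push_neg at hcon
  -- every other vertex of D is at distance ≥ 5 from x
  have hfar : ∀ y ∈ D, y ≠ x → 5 ≤ G.dist x y := by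
    intro y hy hyx
    have h0 : G.dist x y ≠ 0 := fun h => hyx ((hconn.dist_eq_zero_iff).mp h).symm
    have h1 : G.dist x y ≠ 1 := by
      intro h
      have hadj : G.Adj x y := SimpleGraph.dist_eq_one_iff_adj.mp h
      exact no_lift G hcrit D hiso hmin hadj ⟨x, hx, Or.inl rfl⟩ ⟨y, hy, Or.inl rfl⟩
    have h2 : G.dist x y ≠ 2 := by
      intro h
      obtain ⟨a, haadj, hab⟩ := step_back G (x := x) (c := y) (by omega)
      have hxa : G.Adj x a := SimpleGraph.dist_eq_one_iff_adj.mp (by omega)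
      exact no_lift G hcrit D hiso hmin hxa ⟨x, hx, Or.inl rfl⟩
        ⟨y, hy, Or.inr ⟨haadj.symm, hyx⟩⟩
    have h3 : G.dist x y ≠ 3 := by
      intro h
      obtain ⟨b, hbadj, hbd⟩ := step_back G (x := x) (c := y) (by omega)
      obtain ⟨a, haadj, had⟩ := step_back G (x := x) (c := b) (by omega)
      have hxa : G.Adj x a := SimpleGraph.dist_eq_one_iff_adj.mp (by omega)
      refine no_lift G hcrit D hiso hmin haadj
        ⟨x, hx, Or.inr ⟨hxa, ?_⟩⟩ ⟨y, hy, Or.inr ⟨hbadj.symm, ?_⟩⟩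
      · intro hxb; rw [← hxb] at hbd; rw [SimpleGraph.dist_self] at hbd; omega
      · intro hya; rw [← hya] at had; omega
    have h4 : G.dist x y ≠ 4 := hcon y hy hyx
    omega
  -- pick some other vertex of D
  obtain ⟨y0, hy0, hy0x⟩ := Finset.exists_mem_ne (s := D) (by omega) x
  have h5 : 5 ≤ G.dist x y0 := hfar y0 hy0 hy0x
  -- find vertices at distance 3 and 2 along a geodesic
  obtain ⟨c, hc⟩ := exists_dist_eq' G x (G.dist x y0) y0 rfl 3 (by omega)
  obtain ⟨b, hbc, hb⟩ := step_back G (x := x) (c := c) (by omega)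
  -- b and c are both uncovered, contradicting hiso
  have unb : ¬ inClosedNbhd G ↑D b := by
    rintro ⟨d, hd, h | h⟩
    · rcases eq_or_ne d x with hdx | hdx
      · have hxb : x = b := hdx.symm.trans h
        rw [← hxb, SimpleGraph.dist_self] at hb; omega
      · have h1 := hfar d hd hdx
        have htr := hconn.dist_triangle (u := x) (v := b) (w := d)
        have h2 : G.dist b d = 0 := by rw [hconn.dist_eq_zero_iff]; exact h.symm
        omega
    · rcases eq_or_ne d x with hdx | hdx
      · have h2 : G.dist x b = 1 := SimpleGraph.dist_eq_one_iff_adj.mpr (hdx ▸ h)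
        omega
      · have h1 := hfar d hd hdx
        have htr := hconn.dist_triangle (u := x) (v := b) (w := d)
        have h2 : G.dist b d ≤ 1 := le_of_eq (SimpleGraph.dist_eq_one_iff_adj.mpr h.symm)
        omega
  have unc : ¬ inClosedNbhd G ↑D c := by
    rintro ⟨d, hd, h | h⟩
    · rcases eq_or_ne d x with hdx | hdx
      · have hxc : x = c := hdx.symm.trans h
        rw [← hxc, SimpleGraph.dist_self] at hc; omega
      · have h1 := hfar d hd hdx
        have htr := hconn.dist_triangle (u := x) (v := c) (w := d)
        have h2 : G.dist c d = 0 := by rw [hconn.dist_eq_zero_iff]; exact h.symm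
        omega
    · rcases eq_or_ne d x with hdx | hdx
      · have : G.dist x c ≤ 1 := le_of_eq (SimpleGraph.dist_eq_one_iff_adj.mpr (hdx ▸ h))
        omega
      · have h1 := hfar d hd hdx
        have htr := hconn.dist_triangle (u := x) (v := c) (w := d)
        have h2 : G.dist c d ≤ 1 := le_of_eq (SimpleGraph.dist_eq_one_iff_adj.mpr h.symm)
        omega
  rcases hiso b c hbc with h | h
  · exact unb h
  · exact unc h
end

section
/- If T is an (ι,1)-critical tree, then T has exactly one minimum isolating set. -/
open SimpleGraph




open SimpleGraph

namespace Crit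

open Finset

variable {V : Type*} [Fintype V] {T : SimpleGraph V}

lemma iso_exists (T : SimpleGraph V) :
    ∃ D : Finset V, IsIsolating T ↑D ∧ D.card = iso T := by
  have hne : {n | ∃ D : Finset V, D.card = n ∧ IsIsolating T ↑D}.Nonempty :=
    ⟨(Finset.univ : Finset V).card, Finset.univ, rfl,
      fun u v _ => Or.inl ⟨u, by simp, Or.inl rfl⟩⟩
  obtain ⟨D, hc, hi⟩ := Nat.sInf_mem hne
  exact ⟨D, hi, hc⟩

lemma kill (hcrit : ∀ e ∈ T.edgeSet, iso T < iso (subdivide T {e}))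
    {u v : V} (huv : T.Adj u v)
    (S : Finset (V ⊕ {e : Sym2 V // e ∈ ({s(u,v)} : Finset (Sym2 V))}))
    (hcard : S.card = iso T)
    (hS : IsIsolating (subdivide T {s(u,v)}) ↑S) : False := by
  have h1 : iso (subdivide T ({s(u,v)} : Finset (Sym2 V))) ≤ iso T :=
    Nat.sInf_le ⟨S, hcard, hS⟩
  have h2 := hcrit s(u,v) ((T.mem_edgeSet).mpr huv)
  omega

section Flemmas

variable (hcrit : ∀ e ∈ T.edgeSet, iso T < iso (subdivide T {e}))
variable {D : Finset V} (hiso : IsIsolating T ↑D) (hcard : D.card = iso T)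

include hcrit hiso hcard

/-- sole witness property -/
lemma F2 {d v d' : V} (hd : d ∈ D) (hadj : T.Adj d v) (hd' : d' ∈ D)
    (hw : d' = v ∨ T.Adj d' v) : d' = d := by
  classical
  by_contra hne
  set S : Finset (V ⊕ {e : Sym2 V // e ∈ ({s(d,v)} : Finset (Sym2 V))}) :=
    D.image Sum.inl with hSdef
  apply kill hcrit hadj S
    (by rw [hSdef, Finset.card_image_of_injective _ Sum.inl_injective]; exact hcard)
  have cover : ∀ x dx : V, dx ∈ D →
      (dx = x ∨ (T.Adj dx x ∧ s(dx,x) ≠ s(d,v))) →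
      inClosedNbhd (subdivide T {s(d,v)}) ↑S (Sum.inl x) := by
    rintro x dx hdx (rfl | ⟨hA, hne'⟩)
    · exact ⟨Sum.inl dx, by simp [hSdef, hdx], Or.inl rfl⟩
    · exact ⟨Sum.inl dx, by simp [hSdef, hdx], Or.inr ⟨hA, by simpa using hne'⟩⟩
  have coverv : inClosedNbhd (subdivide T {s(d,v)}) ↑S (Sum.inl v) := by
    rcases hw with rfl | hadj'
    · exact cover d' d' hd' (Or.inl rfl)
    · refine cover v d' hd' (Or.inr ⟨hadj', fun hE => ?_⟩)
      rcases Sym2.eq_iff.1 hE with ⟨h1, _⟩ | ⟨h1, _⟩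
      · exact hne h1
      · exact hadj'.ne h1
  rintro (a | w) (b | w') hab
  · have hab' : T.Adj a b ∧ s(a,b) ∉ ({s(d,v)} : Finset (Sym2 V)) := hab
    rcases hiso a b hab'.1 with ⟨dx, hdx, hx⟩ | ⟨dx, hdx, hx⟩
    · left
      rcases hx with rfl | hA
      · exact cover _ _ hdx (Or.inl rfl)
      · by_cases hE : s(dx, a) = s(d,v)
        · rcases Sym2.eq_iff.1 hE with ⟨rfl, rfl⟩ | ⟨rfl, rfl⟩
          · exact coverv
          · exact cover _ _ hd (Or.inl rfl)
        · exact cover a dx hdx (Or.inr ⟨hA, hE⟩)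
    · right
      rcases hx with rfl | hA
      · exact cover _ _ hdx (Or.inl rfl)
      · by_cases hE : s(dx, b) = s(d,v)
        · rcases Sym2.eq_iff.1 hE with ⟨rfl, rfl⟩ | ⟨rfl, rfl⟩
          · exact coverv
          · exact cover _ _ hd (Or.inl rfl)
        · exact cover b dx hdx (Or.inr ⟨hA, hE⟩)
  · have hmem : a ∈ (w'.val : Sym2 V) := hab
    have hval : w'.val = s(d,v) := Finset.mem_singleton.1 w'.2
    rw [hval, Sym2.mem_iff] at hmem
    left
    rcases hmem with rfl | rfl
    · exact cover _ _ hd (Or.inl rfl)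
    · exact coverv
  · have hmem : b ∈ (w.val : Sym2 V) := hab
    have hval : w.val = s(d,v) := Finset.mem_singleton.1 w.2
    rw [hval, Sym2.mem_iff] at hmem
    right
    rcases hmem with rfl | rfl
    · exact cover _ _ hd (Or.inl rfl)
    · exact coverv
  · exact (hab : False).elim

/-- every neighbour of a vertex of a minimum isolating set has an uncovered
neighbour -/
lemma F3 {d v : V} (hd : d ∈ D) (hadj : T.Adj d v) :
    ∃ x, T.Adj v x ∧ ¬ inClosedNbhd T ↑D x := by
  classical
  by_contra hcon
  push_neg at hcon
  set S : Finset (V ⊕ {e : Sym2 V // e ∈ ({s(d,v)} : Finset (Sym2 V))}) :=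
    D.image Sum.inl with hSdef
  apply kill hcrit hadj S
    (by rw [hSdef, Finset.card_image_of_injective _ Sum.inl_injective]; exact hcard)
  have coverw : inClosedNbhd (subdivide T {s(d,v)}) ↑S
      (Sum.inr ⟨s(d,v), Finset.mem_singleton_self _⟩) :=
    ⟨Sum.inl d, by simp [hSdef, hd], Or.inr (show d ∈ s(d,v) by simp)⟩
  have cover : ∀ x dx : V, dx ∈ D → (dx = x ∨ T.Adj dx x) → x ≠ v →
      inClosedNbhd (subdivide T {s(d,v)}) ↑S (Sum.inl x) := by
    rintro x dx hdx (rfl | hA) hxv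
    · exact ⟨Sum.inl dx, by simp [hSdef, hdx], Or.inl rfl⟩
    · by_cases hE : s(dx, x) = s(d,v)
      · rcases Sym2.eq_iff.1 hE with ⟨rfl, rfl⟩ | ⟨rfl, rfl⟩
        · exact absurd rfl hxv
        · exact ⟨Sum.inl x, by simp [hSdef, hd], Or.inl rfl⟩
      · exact ⟨Sum.inl dx, by simp [hSdef, hdx], Or.inr ⟨hA, by simpa using hE⟩⟩
  rintro (a | w) (b | w') hab
  · have hab' : T.Adj a b ∧ s(a,b) ∉ ({s(d,v)} : Finset (Sym2 V)) := hab
    by_cases hav : a = v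
    · subst hav
      right
      obtain ⟨db, hdb, hwb⟩ := hcon b hab'.1
      exact cover b db hdb hwb (Ne.symm hab'.1.ne)
    · by_cases hbv : b = v
      · subst hbv
        left
        obtain ⟨da, hda, hwa⟩ := hcon a hab'.1.symm
        exact cover a da hda hwa hav
      · rcases hiso a b hab'.1 with ⟨dx, hdx, hx⟩ | ⟨dx, hdx, hx⟩
        · exact Or.inl (cover a dx hdx hx hav)
        · exact Or.inr (cover b dx hdx hx hbv)
  · have hmem : a ∈ (w'.val : Sym2 V) := hab
    have hval : w' = (⟨s(d,v), Finset.mem_singleton_self _⟩ :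
        {e : Sym2 V // e ∈ ({s(d,v)} : Finset (Sym2 V))}) :=
      Subtype.ext (Finset.mem_singleton.1 w'.2)
    subst hval
    rw [Sym2.mem_iff] at hmem
    rcases hmem with rfl | rfl
    · exact Or.inl ⟨Sum.inl a, by simp [hSdef, hd], Or.inl rfl⟩
    · exact Or.inr coverw
  · have hmem : b ∈ (w.val : Sym2 V) := hab
    have hval : w = (⟨s(d,v), Finset.mem_singleton_self _⟩ :
        {e : Sym2 V // e ∈ ({s(d,v)} : Finset (Sym2 V))}) :=
      Subtype.ext (Finset.mem_singleton.1 w.2)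
    subst hval
    rw [Sym2.mem_iff] at hmem
    rcases hmem with rfl | rfl
    · exact Or.inr ⟨Sum.inl b, by simp [hSdef, hd], Or.inl rfl⟩
    · exact Or.inl coverw
  · exact (hab : False).elim

/-- an edge outside `D` cannot have both endpoints covered -/
lemma F4 {a b : V} (hab : T.Adj a b) (haD : a ∉ D) (hbD : b ∉ D)
    (hca : inClosedNbhd T ↑D a) (hcb : inClosedNbhd T ↑D b) : False := by
  classical
  set S : Finset (V ⊕ {e : Sym2 V // e ∈ ({s(a,b)} : Finset (Sym2 V))}) :=
    D.image Sum.inl with hSdef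
  apply kill hcrit hab S
    (by rw [hSdef, Finset.card_image_of_injective _ Sum.inl_injective]; exact hcard)
  have cover : ∀ x dx : V, dx ∈ D → (dx = x ∨ T.Adj dx x) →
      inClosedNbhd (subdivide T {s(a,b)}) ↑S (Sum.inl x) := by
    rintro x dx hdx (rfl | hA)
    · exact ⟨Sum.inl dx, by simp [hSdef, hdx], Or.inl rfl⟩
    · by_cases hE : s(dx, x) = s(a,b)
      · rcases Sym2.eq_iff.1 hE with ⟨rfl, rfl⟩ | ⟨rfl, rfl⟩
        · exact absurd hdx haD
        · exact absurd hdx hbD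
      · exact ⟨Sum.inl dx, by simp [hSdef, hdx], Or.inr ⟨hA, by simpa using hE⟩⟩
  rintro (x | w) (y | w') hxy
  · have hxy' : T.Adj x y ∧ s(x,y) ∉ ({s(a,b)} : Finset (Sym2 V)) := hxy
    rcases hiso x y hxy'.1 with ⟨dx, hdx, hx⟩ | ⟨dx, hdx, hx⟩
    · exact Or.inl (cover x dx hdx hx)
    · exact Or.inr (cover y dx hdx hx)
  · have hmem : x ∈ (w'.val : Sym2 V) := hxy
    have hval : w'.val = s(a,b) := Finset.mem_singleton.1 w'.2
    rw [hval, Sym2.mem_iff] at hmem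
    left
    rcases hmem with rfl | rfl
    · obtain ⟨da, hda, hwa⟩ := hca
      exact cover x da hda hwa
    · obtain ⟨db, hdb, hwb⟩ := hcb
      exact cover x db hdb hwb
  · have hmem : y ∈ (w.val : Sym2 V) := hxy
    have hval : w.val = s(a,b) := Finset.mem_singleton.1 w.2
    rw [hval, Sym2.mem_iff] at hmem
    right
    rcases hmem with rfl | rfl
    · obtain ⟨da, hda, hwa⟩ := hca
      exact cover y da hda hwa
    · obtain ⟨db, hdb, hwb⟩ := hcb
      exact cover y db hdb hwb
  · exact (hxy : False).elim

/-- no vertex of a minimum isolating set is a leaf -/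
lemma F5 {d v : V} (hd : d ∈ D) (hadj : T.Adj d v) :
    ∃ v', T.Adj d v' ∧ v' ≠ v := by
  classical
  by_contra hcon
  push_neg at hcon
  have hvD : v ∉ D := fun hv =>
    hadj.ne (F2 hcrit hiso hcard hd hadj hv (Or.inl rfl)).symm
  set wv : V ⊕ {e : Sym2 V // e ∈ ({s(d,v)} : Finset (Sym2 V))} :=
    Sum.inr ⟨s(d,v), Finset.mem_singleton_self _⟩ with hwv
  set S : Finset (V ⊕ {e : Sym2 V // e ∈ ({s(d,v)} : Finset (Sym2 V))}) :=
    (D.erase d).image Sum.inl ∪ {wv} with hS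
  have hdisj : Disjoint ((D.erase d).image Sum.inl) ({wv} : Finset _) := by
    simp [hwv, Finset.disjoint_singleton_right]
  have hScard : S.card = iso T := by
    rw [hS, Finset.card_union_of_disjoint hdisj,
      Finset.card_image_of_injective _ Sum.inl_injective,
      Finset.card_singleton, Finset.card_erase_of_mem hd,
      Nat.sub_add_cancel (Finset.card_pos.2 ⟨d, hd⟩)]
    exact hcard
  apply kill hcrit hadj S hScard
  have hwS : wv ∈ S := by simp [hS]
  have coverd : inClosedNbhd (subdivide T {s(d,v)}) ↑S (Sum.inl d) :=
    ⟨wv, by simpa using hwS, Or.inr (show d ∈ s(d,v) by simp)⟩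
  have coverv : inClosedNbhd (subdivide T {s(d,v)}) ↑S (Sum.inl v) :=
    ⟨wv, by simpa using hwS, Or.inr (show v ∈ s(d,v) by simp)⟩
  have coverw : inClosedNbhd (subdivide T {s(d,v)}) ↑S wv :=
    ⟨wv, by simpa using hwS, Or.inl rfl⟩
  have cover : ∀ x dx : V, dx ∈ D → (dx = x ∨ T.Adj dx x) →
      inClosedNbhd (subdivide T {s(d,v)}) ↑S (Sum.inl x) := by
    rintro x dx hdx (rfl | hA)
    · by_cases hxd : dx = d
      · subst hxd; exact coverd
      · exact ⟨Sum.inl dx, by simp [hS, hxd, hdx], Or.inl rfl⟩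
    · by_cases hdxd : dx = d
      · subst hdxd
        have : x = v := hcon x hA
        subst this
        exact coverv
      · by_cases hE : s(dx, x) = s(d,v)
        · rcases Sym2.eq_iff.1 hE with ⟨h1, _⟩ | ⟨rfl, rfl⟩
          · exact absurd h1 hdxd
          · exact coverd
        · exact ⟨Sum.inl dx, by simp [hS, hdxd, hdx],
            Or.inr ⟨hA, by simpa using hE⟩⟩
  rintro (x | w) (y | w') hxy
  · have hxy' : T.Adj x y ∧ s(x,y) ∉ ({s(d,v)} : Finset (Sym2 V)) := hxy
    rcases hiso x y hxy'.1 with ⟨dx, hdx, hx⟩ | ⟨dx, hdx, hx⟩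
    · exact Or.inl (cover x dx hdx hx)
    · exact Or.inr (cover y dx hdx hx)
  · right
    have hval : w' = (⟨s(d,v), Finset.mem_singleton_self _⟩ :
        {e : Sym2 V // e ∈ ({s(d,v)} : Finset (Sym2 V))}) :=
      Subtype.ext (Finset.mem_singleton.1 w'.2)
    subst hval
    exact coverw
  · left
    have hval : w = (⟨s(d,v), Finset.mem_singleton_self _⟩ :
        {e : Sym2 V // e ∈ ({s(d,v)} : Finset (Sym2 V))}) :=
      Subtype.ext (Finset.mem_singleton.1 w.2)
    subst hval
    exact coverw
  · exact (hxy : False).elim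

end Flemmas

lemma stepA (hcrit : ∀ e ∈ T.edgeSet, iso T < iso (subdivide T {e}))
    {D1 D2 : Finset V} (h1 : IsIsolating T ↑D1) (hc1 : D1.card = iso T)
    (h2 : IsIsolating T ↑D2) (hc2 : D2.card = iso T)
    {p q : V} (hp1 : p ∈ D1) (hp2 : ¬ inClosedNbhd T ↑D2 p) (hpq : T.Adj p q) :
    ∃ r, T.Adj r q ∧ r ≠ p ∧ r ∈ D2 ∧ ¬ inClosedNbhd T ↑D1 r := by
  have hq2 : inClosedNbhd T ↑D2 q := by
    rcases h2 p q hpq with h | h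
    · exact absurd h hp2
    · exact h
  obtain ⟨r, hr2, hw⟩ := hq2
  have hr2' : r ∈ D2 := by simpa using hr2
  have hrq : T.Adj r q := by
    rcases hw with rfl | h
    · exact absurd ⟨r, hr2, Or.inr hpq.symm⟩ hp2
    · exact h
  have hrp : r ≠ p := fun h => hp2 ⟨r, hr2, Or.inl h⟩
  have hqD1 : q ∉ D1 := fun hq =>
    hpq.ne (F2 hcrit h1 hc1 hp1 hpq hq (Or.inl rfl)).symm
  have hrD1 : r ∉ D1 := fun hr =>
    hrp (F2 hcrit h1 hc1 hp1 hpq hr (Or.inr hrq))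
  have hq1 : inClosedNbhd T ↑D1 q := ⟨p, by simpa using hp1, Or.inr hpq⟩
  have hr1 : ¬ inClosedNbhd T ↑D1 r := fun hr1 =>
    F4 hcrit h1 hc1 hrq hrD1 hqD1 hr1 hq1
  exact ⟨r, hrq, hrp, hr2', hr1⟩

lemma edge_start {a b x : V} (w : T.Walk a b) (hw : w.IsPath)
    (hx : s(x,a) ∈ w.edges) : x = w.getVert 1 := by
  cases w with
  | nil => simp at hx
  | @cons _ c _ h q =>
    rw [Walk.edges_cons, List.mem_cons] at hx
    rcases hx with hx | hx
    · rcases Sym2.eq_iff.1 hx with ⟨_, hac⟩ | ⟨rfl, -⟩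
      · exact absurd hac h.ne
      · simp [Walk.getVert_cons_succ]
    · have hmem : a ∈ q.support := Walk.snd_mem_support_of_mem_edges q hx
      exact absurd hmem ((Walk.cons_isPath_iff h q).1 hw).2

lemma cons_path (hac : T.IsAcyclic) {a b c : V} {w : T.Walk a b} (hw : w.IsPath)
    (h : T.Adj c a) (hsnd : c ≠ w.getVert 1) : (Walk.cons h w).IsPath := by
  classical
  rw [Walk.cons_isPath_iff]
  refine ⟨hw, fun hc => ?_⟩
  have hp := hw.takeUntil hc
  have hedge : s(c,a) ∉ (w.takeUntil c hc).edges := fun hmem =>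
    hsnd (edge_start w hw (Walk.edges_takeUntil_subset _ _ hmem))
  exact hac _ (((w.takeUntil c hc).cons_isCycle_iff h).2 ⟨hp, hedge⟩)

lemma engine1 (hcrit : ∀ e ∈ T.edgeSet, iso T < iso (subdivide T {e}))
    (hac : T.IsAcyclic) :
    ∀ k : ℕ, ∀ D1 D2 : Finset V, IsIsolating T ↑D1 → D1.card = iso T →
      IsIsolating T ↑D2 → D2.card = iso T →
      ∀ (p c x0 : V) (w : T.Walk c x0), w.IsPath → w.getVert 1 = p →
      T.Adj c p → c ∈ D1 → ¬ inClosedNbhd T ↑D2 c →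
      Fintype.card V - w.length ≤ k → False := by
  intro k
  induction k with
  | zero =>
    intro D1 D2 h1 hc1 h2 hc2 p c x0 w hw hsnd hadj hcD1 hcD2 hmeas
    have := hw.length_lt
    omega
  | succ k ih =>
    intro D1 D2 h1 hc1 h2 hc2 p c x0 w hw hsnd hadj hcD1 hcD2 hmeas
    obtain ⟨q, hcq, hqp⟩ := F5 hcrit h1 hc1 hcD1 hadj
    obtain ⟨r, hrq, hrc, hrD2, hrN1⟩ := stepA hcrit h1 hc1 h2 hc2 hcD1 hcD2 hcq
    have hw1 : (Walk.cons hcq.symm w).IsPath :=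
      cons_path hac hw hcq.symm (by rw [hsnd]; exact hqp)
    have hw2 : (Walk.cons hrq (Walk.cons hcq.symm w)).IsPath :=
      cons_path hac hw1 hrq
        (by rw [Walk.getVert_cons_succ, Walk.getVert_zero]; exact hrc)
    refine ih D2 D1 h2 hc2 h1 hc1 q r x0 _ hw2 ?_ hrq hrD2 hrN1 ?_
    · rw [Walk.getVert_cons_succ, Walk.getVert_zero]
    · simp only [Walk.length_cons]
      omega

lemma engine2 (hcrit : ∀ e ∈ T.edgeSet, iso T < iso (subdivide T {e}))
    (hac : T.IsAcyclic) :
    ∀ k : ℕ, ∀ D1 D2 : Finset V, IsIsolating T ↑D1 → D1.card = iso T →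
      IsIsolating T ↑D2 → D2.card = iso T →
      ∀ (a b x0 : V) (w : T.Walk b x0), w.IsPath → w.getVert 1 = a →
      a ∈ D2 → b ∈ D1 → T.Adj a b →
      Fintype.card V - w.length ≤ k → False := by
  intro k
  induction k with
  | zero =>
    intro D1 D2 h1 hc1 h2 hc2 a b x0 w hw hsnd ha2 hb1 hab hmeas
    have := hw.length_lt
    omega
  | succ k ih =>
    intro D1 D2 h1 hc1 h2 hc2 a b x0 w hw hsnd ha2 hb1 hab hmeas
    obtain ⟨x, hbx, hxN2⟩ := F3 hcrit h2 hc2 ha2 hab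
    have hxa : x ≠ a := fun h => hxN2 (h ▸ ⟨a, by simpa using ha2, Or.inl rfl⟩)
    obtain ⟨y, hxy, hyN1⟩ := F3 hcrit h1 hc1 hb1 hbx
    have hyb : y ≠ b := fun h => hyN1 (h ▸ ⟨b, by simpa using hb1, Or.inl rfl⟩)
    have hy2 : inClosedNbhd T ↑D2 y := by
      rcases h2 x y hxy with h | h
      · exact absurd h hxN2
      · exact h
    obtain ⟨c, hc2', hwc⟩ := hy2
    have hc2'' : c ∈ D2 := by simpa using hc2'
    have hcy : T.Adj c y := by
      rcases hwc with rfl | h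
      · exact absurd ⟨c, hc2', Or.inr hxy.symm⟩ hxN2
      · exact h
    have hcx : c ≠ x := fun h => hxN2 ⟨c, hc2', Or.inl h⟩
    have hcD1 : c ∉ D1 := fun h => hyN1 ⟨c, by simpa using h, Or.inr hcy⟩
    have hcN1 : inClosedNbhd T ↑D1 c := by
      rcases h1 y c hcy.symm with h | h
      · exact absurd h hyN1
      · exact h
    obtain ⟨b', hb'1, hwb'⟩ := hcN1
    have hb'1' : b' ∈ D1 := by simpa using hb'1
    have hb'c : T.Adj b' c := by
      rcases hwb' with rfl | h
      · exact absurd hb'1' hcD1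
      · exact h
    have hb'y : b' ≠ y := fun h => hyN1 ⟨b', hb'1, Or.inl h⟩
    have hw1 : (Walk.cons hbx.symm w).IsPath :=
      cons_path hac hw hbx.symm (by rw [hsnd]; exact hxa)
    have hw2 : (Walk.cons hxy.symm (Walk.cons hbx.symm w)).IsPath :=
      cons_path hac hw1 hxy.symm
        (by rw [Walk.getVert_cons_succ, Walk.getVert_zero]; exact hyb)
    have hw3 : (Walk.cons hcy (Walk.cons hxy.symm (Walk.cons hbx.symm w))).IsPath :=
      cons_path hac hw2 hcy
        (by rw [Walk.getVert_cons_succ, Walk.getVert_zero]; exact hcx)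
    have hw4 : (Walk.cons hb'c (Walk.cons hcy (Walk.cons hxy.symm
        (Walk.cons hbx.symm w)))).IsPath :=
      cons_path hac hw3 hb'c
        (by rw [Walk.getVert_cons_succ, Walk.getVert_zero]; exact hb'y)
    refine ih D1 D2 h1 hc1 h2 hc2 c b' x0 _ hw4 ?_ hc2'' hb'1' hb'c.symm ?_
    · rw [Walk.getVert_cons_succ, Walk.getVert_zero]
    · simp only [Walk.length_cons]
      omega

lemma main_aux (hcrit : ∀ e ∈ T.edgeSet, iso T < iso (subdivide T {e}))
    (hT : T.IsTree) {D1 D2 : Finset V}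
    (h1 : IsIsolating T ↑D1) (hc1 : D1.card = iso T)
    (h2 : IsIsolating T ↑D2) (hc2 : D2.card = iso T)
    {d : V} (hd1 : d ∈ D1) (hd2 : d ∉ D2) : False := by
  classical
  have hac := hT.IsAcyclic
  by_cases hN : inClosedNbhd T ↑D2 d
  · obtain ⟨a, ha2, hw⟩ := hN
    have ha2' : a ∈ D2 := by simpa using ha2
    have had : T.Adj a d := by
      rcases hw with rfl | h
      · exact absurd ha2' hd2
      · exact h
    have hpath : (Walk.cons had.symm (Walk.nil : T.Walk a a)).IsPath := by
      rw [Walk.cons_isPath_iff]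
      exact ⟨Walk.IsPath.nil, by simp [had.ne']⟩
    exact engine2 hcrit hac (Fintype.card V) D1 D2 h1 hc1 h2 hc2 a d a
      (Walk.cons had.symm Walk.nil) hpath
      (by rw [Walk.getVert_cons_succ, Walk.getVert_zero]) ha2' hd1 had
      (Nat.sub_le _ _)
  · have hq : ∃ q, T.Adj d q := by
      have hD2ne : D2.Nonempty := Finset.card_pos.1
        (by rw [hc2, ← hc1]; exact Finset.card_pos.2 ⟨d, hd1⟩)
      obtain ⟨e, he⟩ := hD2ne
      have hed : e ≠ d := fun h => hd2 (h ▸ he)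
      obtain ⟨wlk⟩ := hT.isConnected.preconnected d e
      cases wlk with
      | nil => exact absurd rfl hed
      | cons h _ => exact ⟨_, h⟩
    obtain ⟨q, hdq⟩ := hq
    obtain ⟨r, hrq, hrd, hrD2, hrN1⟩ := stepA hcrit h1 hc1 h2 hc2 hd1 hN hdq
    have hpath : (Walk.cons hrq (Walk.cons hdq.symm (Walk.nil : T.Walk d d))).IsPath := by
      rw [Walk.cons_isPath_iff, Walk.cons_isPath_iff]
      refine ⟨⟨Walk.IsPath.nil, by simp [hdq.ne']⟩, ?_⟩
      simp [hrq.ne, hrd]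
    exact engine1 hcrit hac (Fintype.card V) D2 D1 h2 hc2 h1 hc1 q r d
      (Walk.cons hrq (Walk.cons hdq.symm Walk.nil)) hpath
      (by rw [Walk.getVert_cons_succ, Walk.getVert_zero]) hrq hrD2 hrN1
      (Nat.sub_le _ _)

lemma unique (hcrit : ∀ e ∈ T.edgeSet, iso T < iso (subdivide T {e}))
    (hT : T.IsTree) {D1 D2 : Finset V}
    (h1 : IsIsolating T ↑D1) (hc1 : D1.card = iso T)
    (h2 : IsIsolating T ↑D2) (hc2 : D2.card = iso T) : D1 = D2 := by
  by_contra hne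
  have : ¬ (D1 ⊆ D2) ∨ ¬ (D2 ⊆ D1) := by
    by_contra h
    push_neg at h
    exact hne (Finset.Subset.antisymm h.1 h.2)
  rcases this with h | h
  · obtain ⟨d, hd1, hd2⟩ := Finset.not_subset.1 h
    exact main_aux hcrit hT h1 hc1 h2 hc2 hd1 hd2
  · obtain ⟨d, hd2, hd1⟩ := Finset.not_subset.1 h
    exact main_aux hcrit hT h2 hc2 h1 hc1 hd2 hd1

end Crit

theorem stmt19 {V : Type*} [Fintype V] (T : SimpleGraph V) (hT : T.IsTree)
    (hcrit : ∀ e ∈ T.edgeSet, iso T < iso (subdivide T {e})) :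
    ∃! D : Finset V, IsIsolating T ↑D ∧ D.card = iso T := by
  obtain ⟨D0, hiso0, hcard0⟩ := Crit.iso_exists T
  refine ⟨D0, ⟨hiso0, hcard0⟩, ?_⟩
  rintro D ⟨hisoD, hcardD⟩
  exact Crit.unique hcrit hT hisoD hcardD hiso0 hcard0
end
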